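/- arXiv:0911.4387 — 7 statements merged into one kernel-verified Lean document; each statement's English description precedes it below -/
import Mathlib

section
/- If ρ is a quasimetric with constant A₀ and β ≥ 1 satisfies 2^β = 3A₀², and d is a metric with 2^{-β} d(x,y)^β ≤ ρ(x,y) ≤ 4^β d(x,y)^β for all x, y, then: if (X,ρ) is geometrically doubling with constant N, then (X,d) is geometrically doubling with constant N·16^{βn}, where n = log₂ N. -/
/-- If `2^β = 3A₀²`, `β ≥ 1`, and the metric `d` satisfies
`2^{-β} d(x,y)^β ≤ ρ(x,y) ≤ 4^β d(x,y)^β`, then geometric doubling of `(X,ρ)`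
with constant `N` implies geometric doubling of `(X,d)` with constant `N·16^{βn}`,
`n = log₂ N`. -/
theorem stmt_4 (X : Type*) (ρ : X → X → ℝ) (A₀ : ℝ) (hA₀ : 1 ≤ A₀)
    (hρ_symm : ∀ x y, ρ x y = ρ y x)
    (hρ_self : ∀ x, ρ x x = 0)
    (hρ_nonneg : ∀ x y, 0 ≤ ρ x y)
    (hρ_tri : ∀ x y z, ρ x y ≤ A₀ * (ρ x z + ρ z y))
    (d : X → X → ℝ) (β : ℝ) (hβ : 1 ≤ β) (hβA : (2:ℝ) ^ β = 3 * A₀ ^ 2)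
    (hd_symm : ∀ x y, d x y = d y x)
    (hd_self : ∀ x, d x x = 0)
    (hd_nonneg : ∀ x y, 0 ≤ d x y)
    (hd_tri : ∀ x y z, d x y ≤ d x z + d z y)
    (hcomp₁ : ∀ x y, (2:ℝ) ^ (-β) * d x y ^ β ≤ ρ x y)
    (hcomp₂ : ∀ x y, ρ x y ≤ (4:ℝ) ^ β * d x y ^ β)
    (N : ℕ) (hN : 0 < N)
    (hdoubling : ∀ (x : X) (r : ℝ), 0 < r → ∃ F : Finset X,
      F.card ≤ N ∧ {y | ρ y x < r} ⊆ ⋃ w ∈ F, {y | ρ y w < r / 2}) :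
    ∀ (x : X) (r : ℝ), 0 < r → ∃ F : Finset X,
      (F.card : ℝ) ≤ (N : ℝ) * (16:ℝ) ^ (β * Real.logb 2 N) ∧
      {y | d y x < r} ⊆ ⋃ w ∈ F, {y | d y w < r / 2} := by
  classical
  have hβ0 : (0:ℝ) < β := lt_of_lt_of_le one_pos hβ
  have iter : ∀ (k : ℕ) (x : X) (s : ℝ), 0 < s → ∃ F : Finset X,
      F.card ≤ N ^ k ∧ {y | ρ y x < s} ⊆ ⋃ w ∈ F, {y | ρ y w < s / 2 ^ k} := by
    intro k
    induction k with
    | zero =>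
      intro x s hs
      refine ⟨{x}, by simp, ?_⟩
      intro y hy
      simp only [Set.mem_iUnion, Finset.mem_singleton]
      exact ⟨x, rfl, by simpa using hy⟩
    | succ k ih =>
      intro x s hs
      obtain ⟨F, hFc, hFcov⟩ := ih x s hs
      have hsk : 0 < s / 2 ^ k := by positivity
      choose G hGc hGcov using fun w => hdoubling w (s / 2 ^ k) hsk
      refine ⟨F.biUnion G, ?_, ?_⟩
      · calc (F.biUnion G).card ≤ ∑ w ∈ F, (G w).card := Finset.card_biUnion_le
          _ ≤ ∑ _w ∈ F, N := Finset.sum_le_sum fun w _ => hGc w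
          _ = F.card * N := by simp [mul_comm]
          _ ≤ N ^ k * N := Nat.mul_le_mul_right _ hFc
          _ = N ^ (k+1) := by ring
      · intro y hy
        have := hFcov hy
        simp only [Set.mem_iUnion, Set.mem_setOf_eq] at this
        obtain ⟨w, hw, hyw⟩ := this
        have := hGcov w hyw
        simp only [Set.mem_iUnion, Set.mem_setOf_eq] at this
        obtain ⟨v, hv, hyv⟩ := this
        simp only [Set.mem_iUnion, Set.mem_setOf_eq]
        refine ⟨v, Finset.mem_biUnion.2 ⟨w, hw, hv⟩, ?_⟩
        have h2 : s / 2 ^ k / 2 = s / 2 ^ (k+1) := by ring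
        linarith [hyv, h2.le]
  intro x r hr
  set k := ⌈4 * β⌉₊ with hkdef
  have hs : (0:ℝ) < (4:ℝ) ^ β * r ^ β := by positivity
  obtain ⟨F, hFc, hFcov⟩ := iter k x ((4:ℝ) ^ β * r ^ β) hs
  have hN1 : (1:ℝ) ≤ (N:ℝ) := by exact_mod_cast hN
  have hNpos : (0:ℝ) < (N:ℝ) := by exact_mod_cast hN
  refine ⟨F, ?_, ?_⟩
  · have h1 : (F.card : ℝ) ≤ ((N:ℝ)) ^ (k:ℝ) := by
      rw [Real.rpow_natCast]
      exact_mod_cast hFc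
    have hkle : (k:ℝ) ≤ 4 * β + 1 := by
      have := Nat.ceil_lt_add_one (by positivity : (0:ℝ) ≤ 4 * β)
      linarith
    have h2 : ((N:ℝ)) ^ (k:ℝ) ≤ (N:ℝ) ^ (4 * β + 1) :=
      Real.rpow_le_rpow_of_exponent_le hN1 hkle
    have h3 : (N:ℝ) ^ (4 * β + 1) = (N:ℝ) * (N:ℝ) ^ (4 * β) := by
      rw [Real.rpow_add hNpos, Real.rpow_one, mul_comm]
    have h16 : (16:ℝ) ^ (β * Real.logb 2 N) = (N:ℝ) ^ (4 * β) := by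
      have e1 : (16:ℝ) = (2:ℝ) ^ (4:ℝ) := by
        rw [show (4:ℝ) = ((4:ℕ):ℝ) by norm_num, Real.rpow_natCast]; norm_num
      rw [e1, ← Real.rpow_mul (by norm_num : (0:ℝ) ≤ 2)]
      have e2 : (4:ℝ) * (β * Real.logb 2 N) = Real.logb 2 N * (4 * β) := by ring
      rw [e2, Real.rpow_mul (by norm_num : (0:ℝ) ≤ 2),
        Real.rpow_logb (by norm_num) (by norm_num) hNpos]
    rw [h16]
    calc (F.card : ℝ) ≤ (N:ℝ) ^ (4*β+1) := le_trans h1 h2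
      _ = (N:ℝ) * (N:ℝ) ^ (4*β) := h3
  · intro y hy
    have hy' : d y x < r := hy
    have hρyx : ρ y x < (4:ℝ) ^ β * r ^ β := by
      have hd : d y x ^ β < r ^ β :=
        Real.rpow_lt_rpow (hd_nonneg y x) hy' hβ0
      have := hcomp₂ y x
      have h4 : (0:ℝ) < (4:ℝ) ^ β := by positivity
      nlinarith
    have := hFcov hρyx
    simp only [Set.mem_iUnion, Set.mem_setOf_eq] at this
    obtain ⟨w, hw, hyw⟩ := this
    simp only [Set.mem_iUnion, Set.mem_setOf_eq]
    refine ⟨w, hw, ?_⟩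
    -- from hyw : ρ y w < 4^β r^β / 2^k deduce d y w < r/2
    have hlow := hcomp₁ y w
    have h2β : (0:ℝ) < (2:ℝ) ^ (-β) := by positivity
    have hdβ : d y w ^ β < (2:ℝ) ^ β * ((4:ℝ) ^ β * r ^ β / 2 ^ k) := by
      have : (2:ℝ) ^ (-β) * d y w ^ β < (4:ℝ) ^ β * r ^ β / 2 ^ k :=
        lt_of_le_of_lt hlow hyw
      have hmul := (mul_lt_mul_iff_right₀ (show (0:ℝ) < (2:ℝ)^β by positivity)).mpr this
      rw [← mul_assoc, ← Real.rpow_add (by norm_num : (0:ℝ) < 2)] at hmul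
      simpa using hmul
    have hkge : (4:ℝ) * β ≤ (k:ℝ) := Nat.le_ceil _
    have h2k : (16:ℝ) ^ β ≤ (2:ℝ) ^ (k:ℝ) := by
      have e1 : (16:ℝ) ^ β = (2:ℝ) ^ (4 * β) := by
        rw [show (16:ℝ) = (2:ℝ)^(4:ℕ) by norm_num, ← Real.rpow_natCast,
          ← Real.rpow_mul (by norm_num : (0:ℝ) ≤ 2)]
        norm_num
      rw [e1]
      exact Real.rpow_le_rpow_of_exponent_le (by norm_num) hkge
    have h2knat : ((2:ℝ) ^ (k:ℝ)) = (2:ℝ) ^ k := Real.rpow_natCast 2 k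
    have hbound : (2:ℝ) ^ β * ((4:ℝ) ^ β * r ^ β / 2 ^ k) ≤ (r / 2) ^ β := by
      have hrw : (r / 2) ^ β = (2:ℝ) ^ β * (4:ℝ) ^ β * r ^ β / (16:ℝ) ^ β := by
        rw [Real.div_rpow hr.le (by norm_num : (0:ℝ) ≤ 2)]
        have : (16:ℝ) ^ β = (2:ℝ) ^ β * ((2:ℝ) ^ β * (4:ℝ) ^ β) := by
          rw [← Real.mul_rpow (by norm_num) (by norm_num),
            ← Real.mul_rpow (by norm_num) (by norm_num)]
          norm_num
        rw [this]
        field_simp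
      rw [hrw]
      have hnum : (0:ℝ) ≤ (2:ℝ) ^ β * (4:ℝ) ^ β * r ^ β := by positivity
      have h16pos : (0:ℝ) < (16:ℝ) ^ β := by positivity
      have h2kpos : (0:ℝ) < (2:ℝ) ^ k := by positivity
      rw [show (2:ℝ) ^ β * ((4:ℝ) ^ β * r ^ β / 2 ^ k)
          = (2:ℝ) ^ β * (4:ℝ) ^ β * r ^ β / 2 ^ k by ring]
      apply div_le_div_of_nonneg_left hnum h16pos
      rw [← h2knat] at h2kpos ⊢
      exact h2k
    have hfinal : d y w ^ β < (r / 2) ^ β := lt_of_lt_of_le hdβ hbound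
    by_contra hcon
    push_neg at hcon
    have : (r / 2) ^ β ≤ d y w ^ β :=
      Real.rpow_le_rpow (by positivity) hcon hβ0.le
    linarith
end

section
/- Let δ ≤ 1/1000 and for each k ∈ ℤ let (x^k_α) be points with d(x^k_α, x^k_β) ≥ δ^k/8 for α ≠ β and min_α d(x, x^k_α) < 4δ^k for all x. With Christ's partial order ≤ on pairs (k,α) and cubes Q^k_α = ⋃_{(ℓ,β)≤(k,α)} B(x^ℓ_β, δ^ℓ/100), the closures Q̄^k_α cover X for every k ∈ ℤ. -/
lemma doubling_iter {X : Type*} [MetricSpace X] (N : ℕ)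
    (hgd : ∀ (x : X) (r : ℝ), 0 < r → ∃ F : Finset X,
      F.card ≤ N ∧ Metric.ball x r ⊆ ⋃ w ∈ F, Metric.ball w (r / 2)) :
    ∀ (n : ℕ) (y : X) (r : ℝ), 0 < r → ∃ F : Finset X,
      F.card ≤ N ^ n ∧ Metric.ball y r ⊆ ⋃ w ∈ F, Metric.ball w (r / 2 ^ n) := by
  classical
  intro n
  induction n with
  | zero =>
    intro y r hr
    exact ⟨{y}, by simp, by simp⟩
  | succ n ih =>
    intro y r hr
    obtain ⟨F, hFcard, hFcov⟩ := hgd y r hr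
    choose G hGcard hGcov using fun w => ih w (r / 2) (by linarith)
    refine ⟨F.biUnion G, ?_, ?_⟩
    · calc (F.biUnion G).card ≤ ∑ w ∈ F, (G w).card := Finset.card_biUnion_le
        _ ≤ ∑ _w ∈ F, N ^ n := Finset.sum_le_sum fun w _ => hGcard w
        _ = F.card * N ^ n := by simp [Finset.sum_const, mul_comm]
        _ ≤ N * N ^ n := Nat.mul_le_mul_right _ hFcard
        _ = N ^ (n + 1) := (pow_succ N n).symm ▸ (mul_comm _ _)
    · intro z hz
      obtain ⟨_, ⟨w, rfl⟩, _, ⟨hw, rfl⟩, hzw⟩ := hFcov hz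
      have := hGcov w hzw
      obtain ⟨_, ⟨v, rfl⟩, _, ⟨hv, rfl⟩, hzv⟩ := this
      refine Set.mem_biUnion (Finset.mem_biUnion.2 ⟨w, hw, hv⟩) ?_
      have : r / 2 / 2 ^ n = r / 2 ^ (n + 1) := by ring
      rwa [this] at hzv

/-- Christ-type construction: the closures of the dyadic cubes of any fixed
generation `k` cover the whole space `X`. -/
theorem stmt_6 {X : Type*} [MetricSpace X] (N : ℕ) (hN : 0 < N)
    (hgd : ∀ (x : X) (r : ℝ), 0 < r → ∃ F : Finset X,
      F.card ≤ N ∧ Metric.ball x r ⊆ ⋃ w ∈ F, Metric.ball w (r / 2))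
    {ι : Type*} (c : ℤ → ι → X) (δ : ℝ) (hδ0 : 0 < δ) (hδ : δ ≤ 1/1000)
    (hsep : ∀ (k : ℤ) (a b : ι), a ≠ b → δ ^ k / 8 ≤ dist (c k a) (c k b))
    (hcov : ∀ (k : ℤ) (x : X), ∃ a, dist x (c k a) < 4 * δ ^ k)
    (le : ℤ × ι → ℤ × ι → Prop)
    (hle_refl : ∀ p, le p p)
    (hle_trans : ∀ p q s, le p q → le q s → le p s)
    (hle_gen : ∀ p q, le p q → q.1 ≤ p.1)
    (hle_anc : ∀ (m : ℤ) (b : ι) (k : ℤ), k ≤ m → ∃ a, le (m, b) (k, a))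
    (Q : ℤ → ι → Set X)
    (hQ : ∀ k a, Q k a =
      ⋃ p ∈ {p : ℤ × ι | le p (k, a)}, Metric.ball (c p.1 p.2) (δ ^ p.1 / 100))
    (hQball : ∀ (k : ℤ) (a : ι), Q k a ⊆ Metric.ball (c k a) (5 * δ ^ k)) :
    ∀ k : ℤ, (⋃ a, closure (Q k a)) = Set.univ := by
  intro k
  have hδ1 : δ < 1 := by linarith
  have hδk : (0:ℝ) < δ ^ k := zpow_pos hδ0 k
  ext x
  simp only [Set.mem_univ, iff_true, Set.mem_iUnion]
  -- for each n, pick a point at generation k+n near x and its generation-k ancestor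
  have key : ∀ n : ℕ, ∃ (a b : ι), dist x (c (k + n) a) < 4 * δ ^ (k + (n:ℤ)) ∧
      c (k + n) a ∈ Q k b := by
    intro n
    obtain ⟨a, ha⟩ := hcov (k + n) x
    obtain ⟨b, hb⟩ := hle_anc (k + n) a k (le_add_of_nonneg_right (Int.natCast_nonneg n))
    refine ⟨a, b, ha, ?_⟩
    rw [hQ]
    refine Set.mem_biUnion (show ((k + (n:ℤ), a) : ℤ × ι) ∈ _ from hb) ?_
    simp only [Metric.mem_ball, dist_self]
    positivity
  choose a b hab hmem using key
  -- distance estimate for the ancestors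
  have hbdist : ∀ n : ℕ, dist x (c k (b n)) < 9 * δ ^ k := by
    intro n
    have h1 := hab n
    have h2 : dist (c (k + n) (a n)) (c k (b n)) < 5 * δ ^ k :=
      Metric.mem_ball.1 (hQball k (b n) (hmem n))
    have hpow : δ ^ (k + (n:ℤ)) ≤ δ ^ k := by
      rw [zpow_add₀ (ne_of_gt hδ0)]
      calc δ ^ k * δ ^ (n:ℤ) ≤ δ ^ k * 1 := by
            apply mul_le_mul_of_nonneg_left _ (le_of_lt hδk)
            rw [zpow_natCast]
            exact pow_le_one₀ (le_of_lt hδ0) (le_of_lt hδ1)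
        _ = δ ^ k := mul_one _
    calc dist x (c k (b n)) ≤ dist x (c (k + n) (a n)) + dist (c (k + n) (a n)) (c k (b n)) :=
          dist_triangle _ _ _
      _ < 4 * δ ^ (k + (n:ℤ)) + 5 * δ ^ k := by linarith
      _ ≤ 9 * δ ^ k := by linarith
  -- the set of possible ancestors is finite
  have hTfin : Set.Finite {i : ι | dist x (c k i) < 9 * δ ^ k} := by
    obtain ⟨F, _, hFcov⟩ := doubling_iter N hgd 8 x (9 * δ ^ k) (by positivity)
    set T := {i : ι | dist x (c k i) < 9 * δ ^ k}
    have hmap : ∀ i : T, ∃ w ∈ F, c k i ∈ Metric.ball w (9 * δ ^ k / 2 ^ 8) := by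
      intro i
      have : c k i ∈ Metric.ball x (9 * δ ^ k) := by
        rw [Metric.mem_ball, dist_comm]; exact i.2
      obtain ⟨_, ⟨w, rfl⟩, _, ⟨hw, rfl⟩, hmem'⟩ := hFcov this
      exact ⟨w, hw, hmem'⟩
    choose f hfF hf using hmap
    have hinj : Function.Injective f := by
      intro i j hij
      by_contra hne
      have hne' : (i : ι) ≠ (j : ι) := fun h => hne (Subtype.ext h)
      have h1 := hf i
      have h2 := hf j
      rw [hij] at h1
      have : dist (c k i) (c k j) < 2 * (9 * δ ^ k / 2 ^ 8) := by
        calc dist (c k i) (c k j) ≤ dist (c k i) (f j) + dist (c k j) (f j) :=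
              dist_triangle_right _ _ _
          _ < _ := by
              rw [Metric.mem_ball] at h1 h2; linarith
      have hsep' := hsep k i j hne'
      have : δ ^ k / 8 < 2 * (9 * δ ^ k / 2 ^ 8) := lt_of_le_of_lt hsep' this
      nlinarith
    have : Finite T := Finite.of_injective (fun i => (⟨f i, hfF i⟩ : {w // w ∈ F}))
      fun i j h => hinj (congrArg Subtype.val h)
    exact Set.toFinite T
  have : Finite {i : ι | dist x (c k i) < 9 * δ ^ k} := hTfin
  -- pigeonhole
  let g : ℕ → {i : ι | dist x (c k i) < 9 * δ ^ k} := fun n => ⟨b n, hbdist n⟩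
  obtain ⟨t, ht⟩ := Finite.exists_infinite_fiber g
  refine ⟨(t : ι), ?_⟩
  rw [Metric.mem_closure_iff]
  intro ε hε
  -- choose n large with 4 δ^(k+n) < ε
  obtain ⟨n₀, hn₀⟩ := exists_pow_lt_of_lt_one (show (0:ℝ) < ε / (4 * δ ^ k) by positivity) hδ1
  have ht' : (g ⁻¹' {t}).Infinite := Set.infinite_coe_iff.mp ht
  obtain ⟨n, hn, hn₀n⟩ := ht'.exists_gt n₀
  have hgn : b n = (t : ι) :=
    congrArg Subtype.val (Set.mem_singleton_iff.1 (Set.mem_preimage.1 hn))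
  refine ⟨c (k + n) (a n), hgn ▸ hmem n, ?_⟩
  have hlt : 4 * δ ^ (k + (n:ℤ)) < ε := by
    rw [zpow_add₀ (ne_of_gt hδ0), zpow_natCast]
    have hmono : δ ^ n ≤ δ ^ n₀ :=
      pow_le_pow_of_le_one (le_of_lt hδ0) (le_of_lt hδ1) (le_of_lt hn₀n)
    have : δ ^ n₀ < ε / (4 * δ ^ k) := hn₀
    calc 4 * (δ ^ k * δ ^ n) ≤ 4 * (δ ^ k * δ ^ n₀) := by nlinarith
      _ = δ ^ n₀ * (4 * δ ^ k) := by ring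
      _ < ε := (lt_div_iff₀ (by positivity : (0:ℝ) < 4 * δ ^ k)).mp this
  exact lt_trans (hab n) hlt
end

section
/- With the Christ-type cubes Q^k_α as above and closures Q̄^k_α, for any ℓ ≥ k the closed cube Q̄^k_α equals the union of the closed cubes Q̄^ℓ_σ over all σ with (ℓ,σ) ≤ (k,α). -/
/-- Christ-type construction: for `ℓ ≥ k` the closed cube `Q̄^k_α` is the union of
the closed cubes `Q̄^ℓ_σ` over all `σ` with `(ℓ,σ) ≤ (k,α)`. -/
theorem stmt_7 {X : Type*} [MetricSpace X] (N : ℕ) (hN : 0 < N)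
    (hgd : ∀ (x : X) (r : ℝ), 0 < r → ∃ F : Finset X,
      F.card ≤ N ∧ Metric.ball x r ⊆ ⋃ w ∈ F, Metric.ball w (r / 2))
    {ι : Type*} (c : ℤ → ι → X) (δ : ℝ) (hδ0 : 0 < δ) (hδ : δ ≤ 1/1000)
    (hsep : ∀ (k : ℤ) (a b : ι), a ≠ b → δ ^ k / 8 ≤ dist (c k a) (c k b))
    (hcov : ∀ (k : ℤ) (x : X), ∃ a, dist x (c k a) < 4 * δ ^ k)
    (le : ℤ × ι → ℤ × ι → Prop)
    (hle_refl : ∀ p, le p p)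
    (hle_trans : ∀ p q s, le p q → le q s → le p s)
    (hle_gen : ∀ p q, le p q → q.1 ≤ p.1)
    (hle_anc : ∀ (m : ℤ) (b : ι) (k : ℤ), k ≤ m → ∃ a, le (m, b) (k, a))
    (hle_parent_dist : ∀ (m : ℤ) (b a : ι), le (m + 1, b) (m, a) →
      dist (c (m + 1) b) (c m a) < 4 * δ ^ m)
    (hle_close : ∀ (m : ℤ) (b a : ι),
      dist (c (m + 1) b) (c m a) < δ ^ m / 16 → le (m + 1, b) (m, a))
    (hle_unique : ∀ (m : ℤ) (b : ι) (k : ℤ) (a a' : ι),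
      le (m, b) (k, a) → le (m, b) (k, a') → a = a')
    (Q : ℤ → ι → Set X)
    (hQ : ∀ k a, Q k a =
      ⋃ p ∈ {p : ℤ × ι | le p (k, a)}, Metric.ball (c p.1 p.2) (δ ^ p.1 / 100))
    (hQball : ∀ (k : ℤ) (a : ι), Q k a ⊆ Metric.ball (c k a) (5 * δ ^ k))
    (hlocfin : ∀ k : ℤ, LocallyFinite (fun a : ι => closure (Q k a))) :
    ∀ (k ℓ : ℤ), k ≤ ℓ → ∀ a : ι,
      closure (Q k a) = ⋃ σ ∈ {σ : ι | le (ℓ, σ) (k, a)}, closure (Q ℓ σ) := by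
  have hδ1 : δ < 1 := by linarith
  have h1δ : (0:ℝ) < 1 - δ := by linarith
  -- coherence of ancestors
  have coh : ∀ (n : ℤ) (b : ι) (j : ℤ) (τ : ι) (j' : ℤ) (τ' : ι),
      le (n, b) (j, τ) → le (n, b) (j', τ') → j' ≤ j → le (j, τ) (j', τ') := by
    intro n b j τ j' τ' h1 h2 hjj
    obtain ⟨a', ha'⟩ := hle_anc j τ j' hjj
    have := hle_unique n b j' a' τ' (hle_trans _ _ _ h1 ha') h2
    rwa [this] at ha'
  -- distance to ancestor
  have hdist : ∀ (d : ℕ) (j : ℤ) (b τ : ι), le (j + (d:ℤ), b) (j, τ) →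
      dist (c (j + (d:ℤ)) b) (c j τ) < 4 * δ ^ j / (1 - δ) := by
    intro d
    induction d with
    | zero =>
      intro j b τ h
      have hbτ : τ = b := hle_unique j b j τ b (by simpa using h) (hle_refl _)
      subst hbτ
      simp only [Nat.cast_zero, add_zero, dist_self]
      positivity
    | succ d ih =>
      intro j b τ h
      obtain ⟨ρ, hρ⟩ := hle_anc (j + ((d:ℕ)+1:ℕ)) b (j+1) (by push_cast; omega)
      have hρτ : le (j + 1, ρ) (j, τ) := coh _ b _ ρ j τ hρ h (by omega)
      have hρ' : le ((j + 1) + (d:ℤ), b) (j + 1, ρ) := by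
        have e : (j + ((d:ℕ)+1:ℕ) : ℤ) = (j+1) + (d:ℤ) := by push_cast; ring
        rw [e] at hρ; exact hρ
      have h1 := ih (j+1) b ρ hρ'
      have h2 := hle_parent_dist j ρ τ hρτ
      have e : (j + ((d:ℕ)+1:ℕ) : ℤ) = (j+1) + (d:ℤ) := by push_cast; ring
      rw [e]
      have htri := dist_triangle (c ((j+1) + (d:ℤ)) b) (c (j+1) ρ) (c j τ)
      have hz : δ ^ (j+1) = δ ^ j * δ := zpow_add_one₀ (ne_of_gt hδ0) j
      have hpow : (0:ℝ) < δ ^ j := zpow_pos hδ0 j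
      calc dist (c ((j+1) + (d:ℤ)) b) (c j τ)
          ≤ dist (c ((j+1) + (d:ℤ)) b) (c (j+1) ρ) + dist (c (j+1) ρ) (c j τ) := htri
        _ < 4 * δ ^ (j+1) / (1 - δ) + 4 * δ ^ j := by linarith
        _ ≤ 4 * δ ^ j / (1 - δ) := by
            rw [hz, div_add' _ _ _ (ne_of_gt h1δ), div_le_div_iff₀ h1δ h1δ]
            nlinarith
  have hdist' : ∀ (n j : ℤ), j ≤ n → ∀ b τ, le (n, b) (j, τ) →
      dist (c n b) (c j τ) < 4 * δ ^ j / (1 - δ) := by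
    intro n j hjn b τ h
    obtain ⟨d, rfl⟩ : ∃ d : ℕ, n = j + (d:ℤ) := ⟨(n - j).toNat, by omega⟩
    exact hdist d j b τ h
  -- generating balls lie inside cubes of any ancestor
  have hballQ : ∀ (p : ℤ × ι) (j : ℤ) (τ : ι), le p (j, τ) →
      Metric.ball (c p.1 p.2) (δ ^ p.1 / 100) ⊆ Q j τ := by
    intro p j τ hp
    rw [hQ]
    exact Set.subset_biUnion_of_mem
      (u := fun p : ℤ × ι => Metric.ball (c p.1 p.2) (δ ^ p.1 / 100))
      (show p ∈ {p : ℤ × ι | le p (j, τ)} from hp)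
  intro k ℓ hkl a
  set S : Set ι := {σ : ι | le (ℓ, σ) (k, a)} with hS
  -- key density claim
  have hdense : Q k a ⊆ closure (⋃ σ ∈ S, Q ℓ σ) := by
    intro x hx
    rw [hQ] at hx
    simp only [Set.mem_iUnion, Set.mem_setOf_eq, exists_prop, Prod.exists] at hx
    obtain ⟨m, b, hmb, hxb⟩ := hx
    rw [Metric.mem_ball] at hxb
    have hkm : k ≤ m := hle_gen _ _ hmb
    rw [Metric.mem_closure_iff]
    intro ε hε
    rcases le_or_gt ℓ m with hlm | hml
    · -- x itself is in a level ℓ cube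
      obtain ⟨σ, hσ⟩ := hle_anc m b ℓ hlm
      have hσS : σ ∈ S := coh m b ℓ σ k a hσ hmb hkl
      refine ⟨x, Set.mem_biUnion hσS (hballQ (m, b) ℓ σ hσ (Metric.mem_ball.2 hxb)), ?_⟩
      simpa [dist_self] using hε
    · -- approximate by deep centers
      have hℓpos : (0:ℝ) < δ ^ ℓ := zpow_pos hδ0 ℓ
      obtain ⟨t, ht⟩ := exists_pow_lt_of_lt_one
        (div_pos hε (by positivity : (0:ℝ) < 4 * δ ^ ℓ)) hδ1
      set n : ℤ := ℓ + (t:ℤ) with hn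
      have hℓn : ℓ ≤ n := by omega
      have hmn : m + 1 ≤ n := by omega
      have hkn : k ≤ n := by omega
      obtain ⟨bn, hbn⟩ := hcov n x
      have hnpow : δ ^ n ≤ δ ^ (m+1) := zpow_le_zpow_right_of_le_one₀ hδ0 hδ1.le hmn
      have hm1 : δ ^ (m+1) = δ ^ m * δ := zpow_add_one₀ (ne_of_gt hδ0) m
      have hmpos : (0:ℝ) < δ ^ m := zpow_pos hδ0 m
      have hδn : 4 * δ ^ n < ε := by
        have hzn : δ ^ n = δ ^ ℓ * δ ^ t := by
          rw [hn, zpow_add₀ (ne_of_gt hδ0), zpow_natCast]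
        rw [hzn]
        have ht' : δ ^ t * (4 * δ ^ ℓ) < ε :=
          (lt_div_iff₀ (by positivity)).mp ht
        nlinarith
      -- ancestor of bn at level m+1 is a child of b
      obtain ⟨τ, hτ⟩ := hle_anc n bn (m+1) hmn
      have hτd : dist (c n bn) (c (m+1) τ) < 4 * δ ^ (m+1) / (1 - δ) :=
        hdist' n (m+1) hmn bn τ hτ
      have hτb : le (m+1, τ) (m, b) := by
        apply hle_close
        have htri : dist (c (m+1) τ) (c m b) ≤
            dist (c (m+1) τ) (c n bn) + dist (c n bn) x + dist x (c m b) :=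
          dist_triangle4 _ _ _ _
        rw [dist_comm (c (m+1) τ) (c n bn), dist_comm (c n bn) x] at htri
        have h1 : 4 * δ ^ (m+1) / (1 - δ) ≤ 8 * δ ^ (m+1) := by
          rw [div_le_iff₀ h1δ]
          nlinarith [zpow_pos hδ0 (m+1)]
        have h2 : δ ^ (m+1) ≤ δ ^ m / 1000 := by nlinarith
        have h3 : 4 * δ ^ n ≤ 4 * δ ^ (m+1) := by linarith
        linarith
      have hbn_ka : le (n, bn) (k, a) :=
        hle_trans _ _ _ (hle_trans _ _ _ hτ hτb) hmb
      obtain ⟨σ, hσ⟩ := hle_anc n bn ℓ hℓn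
      have hσS : σ ∈ S := coh n bn ℓ σ k a hσ hbn_ka hkl
      refine ⟨c n bn, Set.mem_biUnion hσS ?_, ?_⟩
      · exact hballQ (n, bn) ℓ σ hσ (Metric.mem_ball.2 (by
          simpa [dist_self] using (by positivity : (0:ℝ) < δ ^ n / 100)))
      · exact lt_trans hbn hδn
  -- locally finite union of closures is closed
  have lfS : LocallyFinite (fun σ : S => Q ℓ (σ:ι)) :=
    ((hlocfin ℓ).comp_injective Subtype.val_injective).subset fun σ => subset_closure
  apply Set.Subset.antisymm
  · have h1 : closure (Q k a) ⊆ closure (⋃ σ ∈ S, Q ℓ σ) :=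
      closure_minimal hdense isClosed_closure
    refine h1.trans ?_
    rw [Set.biUnion_eq_iUnion, lfS.closure_iUnion]
    exact Set.iUnion_subset fun σ =>
      Set.subset_biUnion_of_mem (u := fun σ : ι => closure (Q ℓ σ)) σ.2
  · refine Set.iUnion₂_subset fun σ hσ => closure_mono ?_
    rw [hQ ℓ σ, hQ k a]
    exact Set.iUnion₂_subset fun p hp =>
      Set.subset_biUnion_of_mem
        (u := fun p : ℤ × ι => Metric.ball (c p.1 p.2) (δ ^ p.1 / 100))
        (show p ∈ {p : ℤ × ι | le p (k, a)} from hle_trans _ _ _ hp hσ)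
end

section
/- Define the open cubes Q̃^k_α = X ∖ ⋃_{β≠α} Q̄^k_β. If ℓ ≥ k, then either Q̃^ℓ_β ⊂ Q̃^k_α or Q̃^ℓ_β ∩ Q̄^k_α = ∅. -/
/-- Christ-type construction: for the open cubes `Q̃^k_α = X ∖ ⋃_{β≠α} Q̄^k_β`,
if `ℓ ≥ k` then either `Q̃^ℓ_β ⊆ Q̃^k_α` or `Q̃^ℓ_β ∩ Q̄^k_α = ∅`. -/
theorem stmt_8 {X : Type*} [MetricSpace X]
    {ι : Type*} (le : ℤ × ι → ℤ × ι → Prop)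
    (Q : ℤ → ι → Set X) (Qo : ℤ → ι → Set X)
    (hQo : ∀ (k : ℤ) (a : ι),
      Qo k a = (⋃ b ∈ {b : ι | b ≠ a}, closure (Q k b))ᶜ)
    (hsub : ∀ (k : ℤ) (a : ι), Q k a ⊆ Qo k a ∧ Qo k a ⊆ closure (Q k a))
    (hdecomp : ∀ (k ℓ : ℤ), k ≤ ℓ → ∀ a : ι,
      closure (Q k a) = ⋃ σ ∈ {σ : ι | le (ℓ, σ) (k, a)}, closure (Q ℓ σ))
    (hdyadic : ∀ (k ℓ : ℤ), k ≤ ℓ → ∀ (a b : ι),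
      Q ℓ b ⊆ Q k a ∨ Q ℓ b ∩ closure (Q k a) = ∅)
    (hle_unique : ∀ (m : ℤ) (b : ι) (k : ℤ) (a a' : ι),
      le (m, b) (k, a) → le (m, b) (k, a') → a = a') :
    ∀ (k ℓ : ℤ), k ≤ ℓ → ∀ (a b : ι),
      Qo ℓ b ⊆ Qo k a ∨ Qo ℓ b ∩ closure (Q k a) = ∅ := by
  intro k ℓ hkl a b
  -- helper: if x ∈ Qo ℓ b and x ∈ closure (Q k a'), then le (ℓ,b) (k,a')
  have key : ∀ (a' : ι) (x : X), x ∈ Qo ℓ b → x ∈ closure (Q k a') →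
      le (ℓ, b) (k, a') := by
    intro a' x hx hx'
    rw [hdecomp k ℓ hkl a'] at hx'
    simp only [Set.mem_iUnion, Set.mem_setOf_eq, exists_prop] at hx'
    obtain ⟨σ, hσ, hxσ⟩ := hx'
    have hσb : σ = b := by
      by_contra hne
      rw [hQo ℓ b] at hx
      exact hx (Set.mem_biUnion hne hxσ)
    rwa [hσb] at hσ
  have clsub : ∀ (a' : ι), le (ℓ, b) (k, a') →
      closure (Q ℓ b) ⊆ closure (Q k a') := by
    intro a' hle
    rw [hdecomp k ℓ hkl a']
    exact Set.subset_biUnion_of_mem (u := fun σ => closure (Q ℓ σ)) (show b ∈ {σ : ι | le (ℓ, σ) (k, a')} from hle)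
  rcases hdyadic k ℓ hkl a b with h | h
  · left
    intro x hx
    have hxcl : x ∈ closure (Q ℓ b) := (hsub ℓ b).2 hx
    rw [hQo k a]
    intro hmem
    simp only [Set.mem_iUnion, Set.mem_setOf_eq, exists_prop] at hmem
    obtain ⟨a', ha', hx'⟩ := hmem
    have hle : le (ℓ, b) (k, a') := key a' x hx hx'
    have hsubcl : Q ℓ b ⊆ closure (Q k a') :=
      subset_closure.trans (clsub a' hle)
    have hQempty : Q ℓ b = ∅ := by
      ext y
      simp only [Set.mem_empty_iff_false, iff_false]
      intro hy
      have hy1 : y ∈ Qo k a := (hsub k a).1 (h hy)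
      rw [hQo k a] at hy1
      exact hy1 (Set.mem_biUnion ha' (hsubcl hy))
    rw [hQempty, closure_empty] at hxcl
    exact hxcl
  · right
    ext x
    simp only [Set.mem_inter_iff, Set.mem_empty_iff_false, iff_false, not_and]
    intro hx hx'
    have hxcl : x ∈ closure (Q ℓ b) := (hsub ℓ b).2 hx
    have hle : le (ℓ, b) (k, a) := key a x hx hx'
    have hsubcl : Q ℓ b ⊆ closure (Q k a) :=
      subset_closure.trans (clsub a hle)
    have hQempty : Q ℓ b = ∅ := by
      ext y
      simp only [Set.mem_empty_iff_false, iff_false]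
      intro hy
      have : y ∈ Q ℓ b ∩ closure (Q k a) := ⟨hy, hsubcl hy⟩
      rw [h] at this
      exact this
    rw [hQempty, closure_empty] at hxcl
    exact hxcl
end

section
/- There exist Borel sets Q̂^k_α (obtained from open and closed sets by finitely many set operations) with Q̃^k_α ⊂ Q̂^k_α ⊂ Q̄^k_α such that for every k ∈ ℤ the sets (Q̂^k_α)_α partition X, for ℓ ≥ k either Q̂^ℓ_β ⊂ Q̂^k_α or Q̂^ℓ_β ∩ Q̂^k_α = ∅, and Q̂^k_α = ⋃_{β:(ℓ,β)≤(k,α)} Q̂^ℓ_β for every ℓ ≥ k. -/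
open Set

namespace Stmt9Aux

variable {X : Type*} [MetricSpace X] {ι : Type*}

open Classical in
noncomputable def amin [Nonempty ι] (f : ι → ℕ) (S : Set ι) : ι :=
  if h : ∃ c, c ∈ S ∧ ∀ d ∈ S, f c ≤ f d then h.choose else Classical.arbitrary ι

lemma amin_exists (f : ι → ℕ) {S : Set ι} (hS : S.Nonempty) :
    ∃ c, c ∈ S ∧ ∀ d ∈ S, f c ≤ f d := by
  obtain ⟨c, hcS, hfc⟩ := Nat.sInf_mem (hS.image f)
  exact ⟨c, hcS, fun d hd => hfc ▸ Nat.sInf_le ⟨d, hd, rfl⟩⟩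

lemma amin_spec [Nonempty ι] (f : ι → ℕ) {S : Set ι} (hS : S.Nonempty) :
    amin f S ∈ S ∧ ∀ d ∈ S, f (amin f S) ≤ f d := by
  rw [amin, dif_pos (amin_exists f hS)]
  exact (amin_exists f hS).choose_spec

lemma amin_eq [Nonempty ι] {f : ι → ℕ} (hf : Function.Injective f) {S : Set ι} {c : ι}
    (hc : c ∈ S) (hmin : ∀ d ∈ S, f c ≤ f d) : amin f S = c := by
  obtain ⟨h1, h2⟩ := amin_spec f ⟨c, hc⟩
  exact hf (le_antisymm (h2 c hc) (hmin _ h1))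

open Classical in
noncomputable def par (le : ℤ × ι → ℤ × ι → Prop) (ℓ : ℤ) (b : ι) (k : ℤ) : ι :=
  if h : ∃ a, le (ℓ, b) (k, a) then h.choose else b

section WithHyps

variable (le : ℤ × ι → ℤ × ι → Prop) (Q Qo : ℤ → ι → Set X)
variable (hQo : ∀ (k : ℤ) (a : ι),
      Qo k a = (⋃ b ∈ {b : ι | b ≠ a}, closure (Q k b))ᶜ)
variable (hsub : ∀ (k : ℤ) (a : ι), Q k a ⊆ Qo k a ∧ Qo k a ⊆ closure (Q k a))
variable (hcover : ∀ k : ℤ, (⋃ a, closure (Q k a)) = Set.univ)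
variable (hdecomp : ∀ (k ℓ : ℤ), k ≤ ℓ → ∀ a : ι,
      closure (Q k a) = ⋃ σ ∈ {σ : ι | le (ℓ, σ) (k, a)}, closure (Q ℓ σ))
variable (htri : ∀ (k ℓ : ℤ), k ≤ ℓ → ∀ (a b : ι),
      Qo ℓ b ⊆ Qo k a ∨ Qo ℓ b ∩ closure (Q k a) = ∅)

set_option linter.unusedSectionVars false

include hQo in
lemma disj {k : ℤ} {a b : ι} {x : X} (hab : b ≠ a) (h1 : x ∈ Qo k a)
    (h2 : x ∈ closure (Q k b)) : False := by
  rw [hQo] at h1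
  exact h1 (mem_biUnion hab h2)

include hdecomp in
lemma cl_subset {k ℓ : ℤ} {a b : ι} (hkl : k ≤ ℓ) (hle : le (ℓ, b) (k, a)) :
    closure (Q ℓ b) ⊆ closure (Q k a) := by
  rw [hdecomp k ℓ hkl a]
  exact subset_biUnion_of_mem (u := fun σ => closure (Q ℓ σ))
    (show b ∈ {σ : ι | le (ℓ, σ) (k, a)} from hle)

include hQo hsub htri in
lemma uniq {k ℓ : ℤ} {b c c' : ι} {y : X} (hkl : k ≤ ℓ) (hy : y ∈ Qo ℓ b)
    (h1 : y ∈ closure (Q k c)) (h2 : y ∈ closure (Q k c')) : c = c' := by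
  have hc : y ∈ Qo k c := by
    rcases htri k ℓ hkl c b with h | h
    · exact h hy
    · exact absurd (h ▸ (⟨hy, h1⟩ : y ∈ Qo ℓ b ∩ closure (Q k c))) (notMem_empty y)
  by_contra hne
  exact disj (Q := Q) (Qo := Qo) (hQo := hQo) (Ne.symm hne) hc h2

include hQo hsub hcover hdecomp in
lemma parent_exists {k ℓ : ℤ} {b : ι} (hkl : k ≤ ℓ)
    (hne : (closure (Q ℓ b)).Nonempty) : ∃ a, le (ℓ, b) (k, a) := by
  obtain ⟨y, hy⟩ := (closure_nonempty_iff.mp hne).mono (hsub ℓ b).1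
  have hy0 : y ∈ ⋃ a, closure (Q k a) := (hcover k).symm ▸ mem_univ y
  obtain ⟨a₀, ha₀⟩ := mem_iUnion.mp hy0
  rw [hdecomp k ℓ hkl a₀] at ha₀
  obtain ⟨σ, hσle, hyσ⟩ := mem_iUnion₂.mp ha₀
  have hσb : σ = b := by
    by_contra hne'
    exact disj (Q := Q) (Qo := Qo) (hQo := hQo) hne' hy hyσ
  exact ⟨a₀, hσb ▸ hσle⟩

include hQo hsub hcover hdecomp in
lemma par_le_spec {k ℓ : ℤ} {b : ι} (hkl : k ≤ ℓ) (hne : (closure (Q ℓ b)).Nonempty) :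
    le (ℓ, b) (k, par le ℓ b k) := by
  have h := parent_exists (le := le) (Q := Q) (Qo := Qo) (hQo := hQo) (hsub := hsub)
    (hcover := hcover) (hdecomp := hdecomp) hkl hne
  rw [par, dif_pos h]
  exact h.choose_spec

include hQo hsub hdecomp htri in
lemma parent_unique {k ℓ : ℤ} {b a a' : ι} (hkl : k ≤ ℓ)
    (hne : (closure (Q ℓ b)).Nonempty) (h1 : le (ℓ, b) (k, a)) (h2 : le (ℓ, b) (k, a')) :
    a = a' := by
  obtain ⟨y, hy⟩ := (closure_nonempty_iff.mp hne).mono (hsub ℓ b).1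
  have hyc : y ∈ closure (Q ℓ b) := (hsub ℓ b).2 hy
  exact uniq (Q := Q) (Qo := Qo) (hQo := hQo) (hsub := hsub) (htri := htri) hkl hy
    (cl_subset (le := le) (Q := Q) (hdecomp := hdecomp) hkl h1 hyc)
    (cl_subset (le := le) (Q := Q) (hdecomp := hdecomp) hkl h2 hyc)

include hQo hsub hcover hdecomp htri in
lemma par_eq {k ℓ : ℤ} {b a : ι} (hkl : k ≤ ℓ) (hne : (closure (Q ℓ b)).Nonempty)
    (h : le (ℓ, b) (k, a)) : par le ℓ b k = a :=
  parent_unique (le := le) (Q := Q) (Qo := Qo) (hQo := hQo) (hsub := hsub)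
    (hdecomp := hdecomp) (htri := htri) hkl hne
    (par_le_spec (le := le) (Q := Q) (Qo := Qo) (hQo := hQo) (hsub := hsub)
      (hcover := hcover) (hdecomp := hdecomp) hkl hne) h

include hQo hsub hcover hdecomp in
lemma par_mem {k ℓ : ℤ} {b : ι} {x : X} (hkl : k ≤ ℓ) (hx : x ∈ closure (Q ℓ b)) :
    x ∈ closure (Q k (par le ℓ b k)) :=
  cl_subset (le := le) (Q := Q) (hdecomp := hdecomp) hkl
    (par_le_spec (le := le) (Q := Q) (Qo := Qo) (hQo := hQo) (hsub := hsub)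
      (hcover := hcover) (hdecomp := hdecomp) hkl ⟨x, hx⟩) hx

include hQo hsub hcover hdecomp htri in
lemma par_coh {k1 k2 ℓ : ℤ} {b : ι} (h1 : k1 ≤ k2) (h2 : k2 ≤ ℓ)
    (hne : (closure (Q ℓ b)).Nonempty) :
    par le ℓ b k1 = par le k2 (par le ℓ b k2) k1 := by
  obtain ⟨y, hy⟩ := (closure_nonempty_iff.mp hne).mono (hsub ℓ b).1
  have hyc : y ∈ closure (Q ℓ b) := (hsub ℓ b).2 hy
  have m2 : y ∈ closure (Q k2 (par le ℓ b k2)) :=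
    par_mem (le := le) (Q := Q) (Qo := Qo) (hQo := hQo) (hsub := hsub)
      (hcover := hcover) (hdecomp := hdecomp) h2 hyc
  have m1 : y ∈ closure (Q k1 (par le k2 (par le ℓ b k2) k1)) :=
    par_mem (le := le) (Q := Q) (Qo := Qo) (hQo := hQo) (hsub := hsub)
      (hcover := hcover) (hdecomp := hdecomp) h1 m2
  have m1' : y ∈ closure (Q k1 (par le ℓ b k1)) :=
    par_mem (le := le) (Q := Q) (Qo := Qo) (hQo := hQo) (hsub := hsub)
      (hcover := hcover) (hdecomp := hdecomp) (h1.trans h2) hyc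
  exact uniq (Q := Q) (Qo := Qo) (hQo := hQo) (hsub := hsub) (htri := htri)
    (h1.trans h2) hy m1' m1

include hQo hsub hcover hdecomp htri in
lemma par_self {ℓ : ℤ} {b : ι} (hne : (closure (Q ℓ b)).Nonempty) :
    par le ℓ b ℓ = b := by
  obtain ⟨y, hy⟩ := (closure_nonempty_iff.mp hne).mono (hsub ℓ b).1
  have hyc : y ∈ closure (Q ℓ b) := (hsub ℓ b).2 hy
  exact uniq (Q := Q) (Qo := Qo) (hQo := hQo) (hsub := hsub) (htri := htri) le_rfl hy
    (par_mem (le := le) (Q := Q) (Qo := Qo) (hQo := hQo) (hsub := hsub)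
      (hcover := hcover) (hdecomp := hdecomp) le_rfl hyc) hyc

end WithHyps

/-- The recursive choice of a label at each nonnegative level. -/
noncomputable def gfun [Nonempty ι] (le : ℤ × ι → ℤ × ι → Prop) (Q : ℤ → ι → Set X)
    (f : ι → ℕ) (x : X) : ℕ → ι
  | 0 => amin f {b | x ∈ closure (Q 0 b)}
  | n + 1 => amin f {b | x ∈ closure (Q ((n : ℤ) + 1) b) ∧
      le ((n : ℤ) + 1, b) ((n : ℤ), gfun le Q f x n)}

section WithHyps2

variable (le : ℤ × ι → ℤ × ι → Prop) (Q Qo : ℤ → ι → Set X)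
variable (hQo : ∀ (k : ℤ) (a : ι),
      Qo k a = (⋃ b ∈ {b : ι | b ≠ a}, closure (Q k b))ᶜ)
variable (hsub : ∀ (k : ℤ) (a : ι), Q k a ⊆ Qo k a ∧ Qo k a ⊆ closure (Q k a))
variable (hcover : ∀ k : ℤ, (⋃ a, closure (Q k a)) = Set.univ)
variable (hdecomp : ∀ (k ℓ : ℤ), k ≤ ℓ → ∀ a : ι,
      closure (Q k a) = ⋃ σ ∈ {σ : ι | le (ℓ, σ) (k, a)}, closure (Q ℓ σ))
variable (htri : ∀ (k ℓ : ℤ), k ≤ ℓ → ∀ (a b : ι),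
      Qo ℓ b ⊆ Qo k a ∨ Qo ℓ b ∩ closure (Q k a) = ∅)
variable (f : ι → ℕ)

set_option linter.unusedSectionVars false

include hcover in
lemma S0_ne (x : X) : {b : ι | x ∈ closure (Q 0 b)}.Nonempty := by
  have hx : x ∈ ⋃ a, closure (Q (0 : ℤ) a) := (hcover 0).symm ▸ mem_univ x
  obtain ⟨a, ha⟩ := mem_iUnion.mp hx
  exact ⟨a, ha⟩

include hdecomp in
lemma Sn_ne {x : X} {n : ℕ} {c' : ι} (h : x ∈ closure (Q (n : ℤ) c')) :
    {b : ι | x ∈ closure (Q ((n : ℤ) + 1) b) ∧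
      le ((n : ℤ) + 1, b) ((n : ℤ), c')}.Nonempty := by
  rw [hdecomp (n : ℤ) ((n : ℤ) + 1) (by omega) c'] at h
  obtain ⟨σ, hσ, hmem⟩ := mem_iUnion₂.mp h
  exact ⟨σ, hmem, hσ⟩

variable [Nonempty ι]

include hcover hdecomp in
lemma g_mem (x : X) : ∀ n : ℕ, x ∈ closure (Q (n : ℤ) (gfun le Q f x n))
  | 0 => by
    have h := (amin_spec f (S0_ne (Q := Q) (hcover := hcover) x)).1
    rw [show ((0 : ℕ) : ℤ) = (0 : ℤ) from rfl]
    exact h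
  | n + 1 => by
    have hne := Sn_ne (le := le) (Q := Q) (hdecomp := hdecomp)
      (g_mem x n)
    have h := (amin_spec f hne).1
    have hcast : ((n + 1 : ℕ) : ℤ) = (n : ℤ) + 1 := by push_cast; ring
    rw [hcast]
    exact h.1

include hcover hdecomp in
lemma g_step (x : X) (n : ℕ) :
    le ((n : ℤ) + 1, gfun le Q f x (n + 1)) ((n : ℤ), gfun le Q f x n) := by
  have hne := Sn_ne (le := le) (Q := Q) (hdecomp := hdecomp)
    (g_mem (le := le) (Q := Q) (hcover := hcover) (hdecomp := hdecomp) (f := f) x n)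
  exact (amin_spec f hne).1.2

include hQo hsub hcover hdecomp htri in
lemma g_par (x : X) {m n : ℕ} (h : m ≤ n) :
    par le (n : ℤ) (gfun le Q f x n) (m : ℤ) = gfun le Q f x m := by
  induction n, h using Nat.le_induction with
  | base =>
    exact par_self (le := le) (Q := Q) (Qo := Qo) (hQo := hQo) (hsub := hsub)
      (hcover := hcover) (hdecomp := hdecomp) (htri := htri)
      ⟨x, g_mem (le := le) (Q := Q) (hcover := hcover) (hdecomp := hdecomp) (f := f) x m⟩
  | succ n hmn ih =>
    have hcast : ((n + 1 : ℕ) : ℤ) = (n : ℤ) + 1 := by push_cast; ring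
    have hnem : (closure (Q ((n : ℤ) + 1) (gfun le Q f x (n + 1)))).Nonempty := by
      refine ⟨x, ?_⟩
      have := g_mem (le := le) (Q := Q) (hcover := hcover) (hdecomp := hdecomp) (f := f)
        x (n + 1)
      rwa [hcast] at this
    have h1 : par le ((n : ℤ) + 1) (gfun le Q f x (n + 1)) (n : ℤ) = gfun le Q f x n :=
      par_eq (le := le) (Q := Q) (Qo := Qo) (hQo := hQo) (hsub := hsub)
        (hcover := hcover) (hdecomp := hdecomp) (htri := htri) (by omega) hnem
        (g_step (le := le) (Q := Q) (hcover := hcover) (hdecomp := hdecomp) (f := f) x n)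
    have hco := par_coh (le := le) (Q := Q) (Qo := Qo) (hQo := hQo) (hsub := hsub)
      (hcover := hcover) (hdecomp := hdecomp) (htri := htri)
      (k1 := (m : ℤ)) (k2 := (n : ℤ)) (ℓ := (n : ℤ) + 1)
      (by exact_mod_cast hmn) (by omega) hnem
    rw [hcast, hco, h1, ih]

end WithHyps2

/-- The chosen label of `x` at level `k`. -/
noncomputable def gam [Nonempty ι] (le : ℤ × ι → ℤ × ι → Prop) (Q : ℤ → ι → Set X)
    (f : ι → ℕ) (x : X) (k : ℤ) : ι :=
  par le (k.toNat : ℤ) (gfun le Q f x k.toNat) k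

section WithHyps3

variable (le : ℤ × ι → ℤ × ι → Prop) (Q Qo : ℤ → ι → Set X)
variable (hQo : ∀ (k : ℤ) (a : ι),
      Qo k a = (⋃ b ∈ {b : ι | b ≠ a}, closure (Q k b))ᶜ)
variable (hsub : ∀ (k : ℤ) (a : ι), Q k a ⊆ Qo k a ∧ Qo k a ⊆ closure (Q k a))
variable (hcover : ∀ k : ℤ, (⋃ a, closure (Q k a)) = Set.univ)
variable (hdecomp : ∀ (k ℓ : ℤ), k ≤ ℓ → ∀ a : ι,
      closure (Q k a) = ⋃ σ ∈ {σ : ι | le (ℓ, σ) (k, a)}, closure (Q ℓ σ))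
variable (htri : ∀ (k ℓ : ℤ), k ≤ ℓ → ∀ (a b : ι),
      Qo ℓ b ⊆ Qo k a ∨ Qo ℓ b ∩ closure (Q k a) = ∅)
variable (f : ι → ℕ) [Nonempty ι]

set_option linter.unusedSectionVars false

include hQo hsub hcover hdecomp in
lemma gam_mem (x : X) (k : ℤ) : x ∈ closure (Q k (gam le Q f x k)) :=
  par_mem (le := le) (Q := Q) (Qo := Qo) (hQo := hQo) (hsub := hsub)
    (hcover := hcover) (hdecomp := hdecomp) (Int.self_le_toNat k)
    (g_mem (le := le) (Q := Q) (hcover := hcover) (hdecomp := hdecomp) (f := f) x k.toNat)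

include hQo hsub hcover hdecomp htri in
lemma gam_eq (x : X) {k : ℤ} {n : ℕ} (h : k ≤ (n : ℤ)) :
    gam le Q f x k = par le (n : ℤ) (gfun le Q f x n) k := by
  have h1 : k ≤ (k.toNat : ℤ) := Int.self_le_toNat k
  have h2 : k.toNat ≤ n := Int.toNat_le.mpr h
  have hco := par_coh (le := le) (Q := Q) (Qo := Qo) (hQo := hQo) (hsub := hsub)
    (hcover := hcover) (hdecomp := hdecomp) (htri := htri)
    (k1 := k) (k2 := (k.toNat : ℤ)) (ℓ := (n : ℤ)) h1 (by exact_mod_cast h2)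
    ⟨x, g_mem (le := le) (Q := Q) (hcover := hcover) (hdecomp := hdecomp) (f := f) x n⟩
  rw [gam, hco,
    g_par (le := le) (Q := Q) (Qo := Qo) (hQo := hQo) (hsub := hsub)
      (hcover := hcover) (hdecomp := hdecomp) (htri := htri) (f := f) x h2]

include hQo hsub hcover hdecomp htri in
lemma gam_le (x : X) {k ℓ : ℤ} (hkl : k ≤ ℓ) :
    le (ℓ, gam le Q f x ℓ) (k, gam le Q f x k) := by
  set n := ℓ.toNat with hn
  have hℓn : ℓ ≤ (n : ℤ) := Int.self_le_toNat ℓ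
  have hkn : k ≤ (n : ℤ) := hkl.trans hℓn
  rw [gam_eq (le := le) (Q := Q) (Qo := Qo) (hQo := hQo) (hsub := hsub)
      (hcover := hcover) (hdecomp := hdecomp) (htri := htri) (f := f) x hkn,
    gam_eq (le := le) (Q := Q) (Qo := Qo) (hQo := hQo) (hsub := hsub)
      (hcover := hcover) (hdecomp := hdecomp) (htri := htri) (f := f) x hℓn]
  have hco := par_coh (le := le) (Q := Q) (Qo := Qo) (hQo := hQo) (hsub := hsub)
    (hcover := hcover) (hdecomp := hdecomp) (htri := htri)
    (k1 := k) (k2 := ℓ) (ℓ := (n : ℤ)) hkl hℓn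
    ⟨x, g_mem (le := le) (Q := Q) (hcover := hcover) (hdecomp := hdecomp) (f := f) x n⟩
  rw [hco]
  exact par_le_spec (le := le) (Q := Q) (Qo := Qo) (hQo := hQo) (hsub := hsub)
    (hcover := hcover) (hdecomp := hdecomp) hkl
    ⟨x, par_mem (le := le) (Q := Q) (Qo := Qo) (hQo := hQo) (hsub := hsub)
      (hcover := hcover) (hdecomp := hdecomp) hℓn
      (g_mem (le := le) (Q := Q) (hcover := hcover) (hdecomp := hdecomp) (f := f) x n)⟩

include hQo hsub hcover hdecomp in
lemma gam_open {x : X} {k : ℤ} {a : ι} (hx : x ∈ Qo k a) : gam le Q f x k = a := by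
  by_contra h
  exact disj (Q := Q) (Qo := Qo) (hQo := hQo) h hx
    (gam_mem (le := le) (Q := Q) (Qo := Qo) (hQo := hQo) (hsub := hsub)
      (hcover := hcover) (hdecomp := hdecomp) (f := f) x k)

variable [MeasurableSpace X] [BorelSpace X] [Countable ι]

include hcover hdecomp in
lemma g_meas (hf : Function.Injective f) :
    ∀ (n : ℕ) (c : ι), MeasurableSet {x : X | gfun le Q f x n = c} := by
  intro n
  induction n with
  | zero =>
    intro c
    have hset : {x : X | gfun le Q f x 0 = c} =
        closure (Q (0:ℤ) c) ∩ ⋂ d : ι, {x : X | x ∈ closure (Q (0:ℤ) d) → f c ≤ f d} := by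
      ext x
      simp only [mem_setOf_eq, mem_inter_iff, mem_iInter]
      constructor
      · intro h
        obtain ⟨h1, h2⟩ := amin_spec f (S0_ne (Q := Q) (hcover := hcover) x)
        have hg : gfun le Q f x 0 ∈ {b : ι | x ∈ closure (Q 0 b)} := h1
        have hg2 : ∀ d ∈ {b : ι | x ∈ closure (Q 0 b)}, f (gfun le Q f x 0) ≤ f d := h2
        rw [h] at hg hg2
        exact ⟨hg, fun d hd => hg2 d hd⟩
      · rintro ⟨h1, h2⟩
        exact amin_eq hf h1 (fun d hd => h2 d hd)
    rw [hset]
    refine isClosed_closure.measurableSet.inter (MeasurableSet.iInter fun d => ?_)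
    by_cases hfd : f c ≤ f d
    · simp only [hfd, implies_true, setOf_true]
      exact MeasurableSet.univ
    · have : {x : X | x ∈ closure (Q (0:ℤ) d) → f c ≤ f d} = (closure (Q (0:ℤ) d))ᶜ := by
        ext x; simp [hfd]
      rw [this]
      exact isClosed_closure.measurableSet.compl
  | succ n ih =>
    intro c
    have hset : {x : X | gfun le Q f x (n + 1) = c} =
        ⋃ c' : ι, ({x : X | gfun le Q f x n = c'} ∩
          closure (Q ((n : ℤ) + 1) c) ∩
          {x : X | le ((n : ℤ) + 1, c) ((n : ℤ), c')} ∩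
          ⋂ d : ι, {x : X | (x ∈ closure (Q ((n : ℤ) + 1) d) ∧
            le ((n : ℤ) + 1, d) ((n : ℤ), c')) → f c ≤ f d}) := by
      ext x
      constructor
      · intro h
        rw [mem_setOf_eq] at h
        rw [mem_iUnion]
        refine ⟨gfun le Q f x n, ?_⟩
        have hne := Sn_ne (le := le) (Q := Q) (hdecomp := hdecomp)
          (g_mem (le := le) (Q := Q) (hcover := hcover) (hdecomp := hdecomp) (f := f) x n)
        obtain ⟨h1, h2⟩ := amin_spec f hne
        have hg : gfun le Q f x (n + 1) ∈ {b : ι | x ∈ closure (Q ((n : ℤ) + 1) b) ∧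
            le ((n : ℤ) + 1, b) ((n : ℤ), gfun le Q f x n)} := h1
        have hg2 : ∀ d ∈ {b : ι | x ∈ closure (Q ((n : ℤ) + 1) b) ∧
            le ((n : ℤ) + 1, b) ((n : ℤ), gfun le Q f x n)},
            f (gfun le Q f x (n + 1)) ≤ f d := h2
        rw [h] at hg hg2
        refine ⟨⟨⟨rfl, hg.1⟩, hg.2⟩, ?_⟩
        rw [mem_iInter]
        intro d
        exact fun hd => hg2 d hd
      · intro hx
        rw [mem_iUnion] at hx
        obtain ⟨c', ⟨⟨hgc', hcl⟩, hle⟩, hmin⟩ := hx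
        rw [mem_setOf_eq] at hgc' hle
        rw [mem_iInter] at hmin
        rw [mem_setOf_eq]
        show amin f {b | x ∈ closure (Q ((n : ℤ) + 1) b) ∧
            le ((n : ℤ) + 1, b) ((n : ℤ), gfun le Q f x n)} = c
        rw [hgc']
        exact amin_eq hf ⟨hcl, hle⟩ (fun d hd => hmin d hd)
    rw [hset]
    refine MeasurableSet.iUnion fun c' => ?_
    refine (((ih c').inter isClosed_closure.measurableSet).inter ?_).inter
      (MeasurableSet.iInter fun d => ?_)
    · by_cases hle : le ((n : ℤ) + 1, c) ((n : ℤ), c')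
      · simp only [hle, setOf_true]; exact MeasurableSet.univ
      · simp only [hle, setOf_false]; exact MeasurableSet.empty
    · by_cases hle : le ((n : ℤ) + 1, d) ((n : ℤ), c')
      · by_cases hfd : f c ≤ f d
        · have : {x : X | (x ∈ closure (Q ((n : ℤ) + 1) d) ∧
              le ((n : ℤ) + 1, d) ((n : ℤ), c')) → f c ≤ f d} = univ := by
            ext x; simp [hfd]
          rw [this]; exact MeasurableSet.univ
        · have : {x : X | (x ∈ closure (Q ((n : ℤ) + 1) d) ∧
              le ((n : ℤ) + 1, d) ((n : ℤ), c')) → f c ≤ f d} =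
              (closure (Q ((n : ℤ) + 1) d))ᶜ := by
            ext x; simp [hle, hfd]
          rw [this]
          exact isClosed_closure.measurableSet.compl
      · have : {x : X | (x ∈ closure (Q ((n : ℤ) + 1) d) ∧
            le ((n : ℤ) + 1, d) ((n : ℤ), c')) → f c ≤ f d} = univ := by
          ext x; simp [hle]
        rw [this]; exact MeasurableSet.univ

include hcover hdecomp in
lemma gam_meas (hf : Function.Injective f) (k : ℤ) (a : ι) :
    MeasurableSet {x : X | gam le Q f x k = a} := by
  have hset : {x : X | gam le Q f x k = a} =
      ⋃ c : ι, ({x : X | gfun le Q f x k.toNat = c} ∩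
        {x : X | par le (k.toNat : ℤ) c k = a}) := by
    ext x
    simp only [gam, mem_setOf_eq, mem_iUnion, mem_inter_iff]
    constructor
    · intro h
      exact ⟨gfun le Q f x k.toNat, rfl, h⟩
    · rintro ⟨c, hc, hpar⟩
      rw [hc]
      exact hpar
  rw [hset]
  refine MeasurableSet.iUnion fun c => ?_
  refine (g_meas (le := le) (Q := Q) (hcover := hcover) (hdecomp := hdecomp) (f := f)
    hf k.toNat c).inter ?_
  by_cases hpar : par le (k.toNat : ℤ) c k = a
  · simp only [hpar, setOf_true]; exact MeasurableSet.univ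
  · simp only [hpar, setOf_false]; exact MeasurableSet.empty

end WithHyps3

end Stmt9Aux

/-- Christ-type construction: existence of "half-open" dyadic cubes `Q̂^k_α`
with `Q̃^k_α ⊆ Q̂^k_α ⊆ Q̄^k_α`, exactly partitioning `X` at every generation,
nested, and such that each cube is the union of its descendants. -/
theorem stmt_9 {X : Type*} [MetricSpace X] [MeasurableSpace X] [BorelSpace X]
    {ι : Type*} [Countable ι] (le : ℤ × ι → ℤ × ι → Prop)
    (Q : ℤ → ι → Set X) (Qo : ℤ → ι → Set X)
    (hQo : ∀ (k : ℤ) (a : ι),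
      Qo k a = (⋃ b ∈ {b : ι | b ≠ a}, closure (Q k b))ᶜ)
    (hsub : ∀ (k : ℤ) (a : ι), Q k a ⊆ Qo k a ∧ Qo k a ⊆ closure (Q k a))
    (hcover : ∀ k : ℤ, (⋃ a, closure (Q k a)) = Set.univ)
    (hdecomp : ∀ (k ℓ : ℤ), k ≤ ℓ → ∀ a : ι,
      closure (Q k a) = ⋃ σ ∈ {σ : ι | le (ℓ, σ) (k, a)}, closure (Q ℓ σ))
    (htri : ∀ (k ℓ : ℤ), k ≤ ℓ → ∀ (a b : ι),
      Qo ℓ b ⊆ Qo k a ∨ Qo ℓ b ∩ closure (Q k a) = ∅)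
    (hlocfin : ∀ k : ℤ, LocallyFinite (fun a : ι => closure (Q k a))) :
    ∃ Qh : ℤ → ι → Set X,
      (∀ (k : ℤ) (a : ι), MeasurableSet (Qh k a)) ∧
      (∀ (k : ℤ) (a : ι), Qo k a ⊆ Qh k a ∧ Qh k a ⊆ closure (Q k a)) ∧
      (∀ k : ℤ, (⋃ a, Qh k a) = Set.univ) ∧
      (∀ k : ℤ, Pairwise fun a b : ι => Disjoint (Qh k a) (Qh k b)) ∧
      (∀ (k ℓ : ℤ), k ≤ ℓ → ∀ (a b : ι),
        Qh ℓ b ⊆ Qh k a ∨ Disjoint (Qh ℓ b) (Qh k a)) ∧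
      (∀ (k ℓ : ℤ), k ≤ ℓ → ∀ a : ι,
        Qh k a = ⋃ b ∈ {b : ι | le (ℓ, b) (k, a)}, Qh ℓ b) := by
  classical
  rcases isEmpty_or_nonempty ι with hι | hι
  · -- ι empty: X must be empty
    refine ⟨fun _ _ => ∅, ?_, ?_, ?_, ?_, ?_, ?_⟩
    · intro k a; exact MeasurableSet.empty
    · intro k a; exact isEmptyElim a
    · intro k
      have h1 : (Set.univ : Set X) = ∅ := by
        rw [← hcover 0, Set.iUnion_of_empty]
      rw [Set.iUnion_of_empty, h1]
    · intro k a; exact isEmptyElim a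
    · intro k ℓ h a; exact isEmptyElim a
    · intro k ℓ h a; exact isEmptyElim a
  · obtain ⟨f, hf⟩ := exists_injective_nat ι
    open Stmt9Aux in
    refine ⟨fun k a => {x : X | gam le Q f x k = a}, ?_, ?_, ?_, ?_, ?_, ?_⟩
    · intro k a
      exact gam_meas (le := le) (Q := Q) (hcover := hcover) (hdecomp := hdecomp)
        (f := f) hf k a
    · intro k a
      constructor
      · intro x hx
        exact gam_open (le := le) (Q := Q) (Qo := Qo) (hQo := hQo) (hsub := hsub)
          (hcover := hcover) (hdecomp := hdecomp) (f := f) hx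
      · intro x hx
        rw [Set.mem_setOf_eq] at hx
        have := gam_mem (le := le) (Q := Q) (Qo := Qo) (hQo := hQo) (hsub := hsub)
          (hcover := hcover) (hdecomp := hdecomp) (f := f) x k
        rwa [hx] at this
    · intro k
      ext x
      simp only [Set.mem_iUnion, Set.mem_setOf_eq, Set.mem_univ, iff_true]
      exact ⟨gam le Q f x k, rfl⟩
    · intro k a b hab
      rw [Set.disjoint_left]
      intro x hx hx'
      rw [Set.mem_setOf_eq] at hx hx'
      exact hab (hx ▸ hx'.symm ▸ rfl)
    · intro k ℓ hkl a b
      by_cases hx : ∃ x, x ∈ ({x : X | gam le Q f x ℓ = b} ∩ {x : X | gam le Q f x k = a})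
      · left
        obtain ⟨x, hxb, hxa⟩ := hx
        rw [Set.mem_setOf_eq] at hxb hxa
        have hne : (closure (Q ℓ b)).Nonempty := by
          refine ⟨x, ?_⟩
          have := gam_mem (le := le) (Q := Q) (Qo := Qo) (hQo := hQo) (hsub := hsub)
            (hcover := hcover) (hdecomp := hdecomp) (f := f) x ℓ
          rwa [hxb] at this
        have hlea : le (ℓ, b) (k, a) := by
          have := gam_le (le := le) (Q := Q) (Qo := Qo) (hQo := hQo) (hsub := hsub)
            (hcover := hcover) (hdecomp := hdecomp) (htri := htri) (f := f) x hkl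
          rwa [hxb, hxa] at this
        intro y hy
        rw [Set.mem_setOf_eq] at hy ⊢
        have hley : le (ℓ, b) (k, gam le Q f y k) := by
          have := gam_le (le := le) (Q := Q) (Qo := Qo) (hQo := hQo) (hsub := hsub)
            (hcover := hcover) (hdecomp := hdecomp) (htri := htri) (f := f) y hkl
          rwa [hy] at this
        exact parent_unique (le := le) (Q := Q) (Qo := Qo) (hQo := hQo) (hsub := hsub)
          (hdecomp := hdecomp) (htri := htri) hkl hne hley hlea
      · right
        rw [Set.disjoint_left]
        intro x hxb hxa
        exact hx ⟨x, hxb, hxa⟩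
    · intro k ℓ hkl a
      ext x
      simp only [Set.mem_setOf_eq, Set.mem_iUnion]
      constructor
      · intro h
        refine ⟨gam le Q f x ℓ, ?_, rfl⟩
        have := gam_le (le := le) (Q := Q) (Qo := Qo) (hQo := hQo) (hsub := hsub)
          (hcover := hcover) (hdecomp := hdecomp) (htri := htri) (f := f) x hkl
        rwa [h] at this
      · rintro ⟨b, hb, hxb⟩
        have hne : (closure (Q ℓ b)).Nonempty := by
          refine ⟨x, ?_⟩
          have := gam_mem (le := le) (Q := Q) (Qo := Qo) (hQo := hQo) (hsub := hsub)
            (hcover := hcover) (hdecomp := hdecomp) (f := f) x ℓ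
          rwa [hxb] at this
        have hley : le (ℓ, b) (k, gam le Q f x k) := by
          have := gam_le (le := le) (Q := Q) (Qo := Qo) (hQo := hQo) (hsub := hsub)
            (hcover := hcover) (hdecomp := hdecomp) (htri := htri) (f := f) x hkl
          rwa [hxb] at this
        exact parent_unique (le := le) (Q := Q) (Qo := Qo) (hQo := hQo) (hsub := hsub)
          (hdecomp := hdecomp) (htri := htri) hkl hne hley hb
end

section
/- Separated-sets bilinear bound: let S₁, S₂ ⊂ X with diam(S₁) ∼ diam(S₂) and d(S₁,S₂) ≳ ε·min(diam(S₁), diam(S₂)), and let φ, ψ be bounded functions with ∥φ∥_∞ + ∥ψ∥_∞ ≲ 1, supp φ ⊂ S₁, supp ψ ⊂ S₂. If T has kernel satisfying |K(x,y)| ≤ C min(1/λ(x,d(x,y)), 1/λ(y,d(x,y))), then |⟨Tφ, ψ⟩| ≲ ε^{−d} μ(S₁)^{1/2} μ(S₂)^{1/2}, where d = log₂ C_λ. -/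
open MeasureTheory
open scoped ENNReal

private lemma min_le_sqrt_mul' {a b : ℝ} (ha : 0 ≤ a) (hb : 0 ≤ b) :
    min a b ≤ Real.sqrt (a * b) := by
  rcases le_total a b with h | h
  · rw [min_eq_left h]
    calc a = Real.sqrt (a * a) := (Real.sqrt_mul_self ha).symm
    _ ≤ Real.sqrt (a * b) := Real.sqrt_le_sqrt (by nlinarith)
  · rw [min_eq_right h]
    calc b = Real.sqrt (b * b) := (Real.sqrt_mul_self hb).symm
    _ ≤ Real.sqrt (a * b) := Real.sqrt_le_sqrt (by nlinarith)

private lemma alg_aux' (Ck Cb a b c A v w : ℝ) (hb : b ≠ 0) (hc : c ≠ 0)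
    (ha : a * a = A) (hv : b * b = v) (hw : c * c = w) :
    Ck * (a / c * (a / b)) * Cb * v * Cb * w = Ck * Cb * Cb * A * (b * c) := by
  subst ha hv hw
  field_simp

set_option maxHeartbeats 1000000 in
/-- Separated-sets bilinear bound: for `S₁, S₂` with comparable diameters and
`d(S₁,S₂) ≳ ε·min(diam S₁, diam S₂)`, and bounded `φ, ψ` supported in `S₁, S₂`,
a kernel satisfying the size estimate gives
`|⟨Tφ,ψ⟩| ≲ ε^{−d} μ(S₁)^{1/2} μ(S₂)^{1/2}` with `d = log₂ C_λ`. -/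
theorem stmt_17 (Ck Cl Cdiam Csep Cb : ℝ) (hCk : 0 < Ck) (hCl : 1 < Cl)
    (hCdiam : 1 ≤ Cdiam) (hCsep : 1 ≤ Csep) (hCb : 0 < Cb) :
    ∃ C₀ > (0:ℝ), ∀ (X : Type) [MetricSpace X] [MeasurableSpace X] [BorelSpace X]
      (μ : Measure X) (lam : X → ℝ → ℝ) (K : X → X → ℝ)
      (S₁ S₂ : Set X) (φ ψ : X → ℝ) (ε : ℝ),
      (∀ x r, 0 < r → 0 < lam x r) →
      (∀ x : X, MonotoneOn (lam x) (Set.Ioi (0:ℝ))) →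
      (∀ x r, 0 < r → lam x (2 * r) ≤ Cl * lam x r) →
      (∀ (x : X) (r : ℝ), 0 < r → μ (Metric.ball x r) ≤ ENNReal.ofReal (lam x r)) →
      0 < ε → ε < 1 →
      Bornology.IsBounded S₁ → Bornology.IsBounded S₂ →
      0 < Metric.diam S₁ → 0 < Metric.diam S₂ →
      Metric.diam S₁ ≤ Cdiam * Metric.diam S₂ →
      Metric.diam S₂ ≤ Cdiam * Metric.diam S₁ →
      (∀ x ∈ S₁, ∀ y ∈ S₂,
        Csep⁻¹ * (ε * min (Metric.diam S₁) (Metric.diam S₂)) ≤ dist x y) →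
      (∀ x y : X, x ≠ y →
        |K x y| ≤ Ck * min (1 / lam x (dist x y)) (1 / lam y (dist x y))) →
      Function.support φ ⊆ S₁ → Function.support ψ ⊆ S₂ →
      (∀ x, |φ x| ≤ Cb) → (∀ x, |ψ x| ≤ Cb) →
      |∫ x, (∫ y, K x y * φ y ∂μ) * ψ x ∂μ| ≤
        C₀ * ε ^ (-(Real.logb 2 Cl)) *
          Real.sqrt (μ S₁).toReal * Real.sqrt (μ S₂).toReal := by
  have hCl0 : (0:ℝ) < Cl := lt_trans one_pos hCl
  refine ⟨Ck * Cb * Cb * Cl ^ (1 + Real.logb 2 (2 * Cdiam * Csep)), by positivity, ?_⟩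
  intro X _ _ _ μ lam K S₁ S₂ φ ψ ε hlam hmono hdouble hball hε hε1 hb₁ hb₂ hd₁ hd₂
    hdc₁ hdc₂ hsep hK hφs hψs hφb hψb
  have hεd : (0:ℝ) < ε ^ (-(Real.logb 2 Cl)) := Real.rpow_pos_of_pos hε _
  have hRHS0 : 0 ≤ Ck * Cb * Cb * Cl ^ (1 + Real.logb 2 (2 * Cdiam * Csep)) *
      ε ^ (-(Real.logb 2 Cl)) * Real.sqrt (μ S₁).toReal * Real.sqrt (μ S₂).toReal := by
    positivity
  -- trivial cases: one of the sets is null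
  by_cases h1 : μ S₁ = 0
  · have hφ0 : φ =ᵐ[μ] 0 := by
      rw [Filter.EventuallyEq, ae_iff]
      have := measure_mono_null hφs h1
      simpa [Function.support] using this
    have hin : ∀ x : X, (∫ y, K x y * φ y ∂μ) = 0 := by
      intro x
      apply integral_eq_zero_of_ae
      filter_upwards [hφ0] with y hy
      simp [hy]
    simp only [hin, zero_mul, integral_zero, abs_zero]
    exact hRHS0
  by_cases h2 : μ S₂ = 0
  · have hψ0 : ψ =ᵐ[μ] 0 := by
      rw [Filter.EventuallyEq, ae_iff]
      have := measure_mono_null hψs h2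
      simpa [Function.support] using this
    have : (fun x => (∫ y, K x y * φ y ∂μ) * ψ x) =ᵐ[μ] 0 := by
      filter_upwards [hψ0] with x hx
      simp [hx]
    rw [integral_eq_zero_of_ae this, abs_zero]
    exact hRHS0
  -- main case
  have hCsep0 : (0:ℝ) < Csep := lt_of_lt_of_le one_pos hCsep
  have hCdiam0 : (0:ℝ) < Cdiam := lt_of_lt_of_le one_pos hCdiam
  have hne₁ : S₁.Nonempty := by
    rcases S₁.eq_empty_or_nonempty with h | h
    · exact absurd (h ▸ measure_empty) h1
    · exact h
  have hne₂ : S₂.Nonempty := by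
    rcases S₂.eq_empty_or_nonempty with h | h
    · exact absurd (h ▸ measure_empty) h2
    · exact h
  have hfin : ∀ S : Set X, Bornology.IsBounded S → S.Nonempty → μ S ≠ ∞ := by
    rintro S hbS ⟨z, hz⟩
    have hsub : S ⊆ Metric.ball z (Metric.diam S + 1) := by
      intro w hw
      have := Metric.dist_le_diam_of_mem hbS hw hz
      simp only [Metric.mem_ball]
      linarith
    have hr : (0:ℝ) < Metric.diam S + 1 := by
      have := Metric.diam_nonneg (s := S); linarith
    exact ne_top_of_le_ne_top ENNReal.ofReal_ne_top
      (le_trans (measure_mono hsub) (hball z _ hr))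
  have hfin₁ : μ S₁ ≠ ∞ := hfin S₁ hb₁ hne₁
  have hfin₂ : μ S₂ ≠ ∞ := hfin S₂ hb₂ hne₂
  set μ₁ : ℝ := (μ S₁).toReal with hμ₁def
  set μ₂ : ℝ := (μ S₂).toReal with hμ₂def
  have hμ₁ : 0 < μ₁ := ENNReal.toReal_pos h1 hfin₁
  have hμ₂ : 0 < μ₂ := ENNReal.toReal_pos h2 hfin₂
  clear_value μ₁ μ₂
  set m : ℝ := min (Metric.diam S₁) (Metric.diam S₂) with hmdef
  have hm : 0 < m := lt_min hd₁ hd₂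
  clear_value m
  set s : ℝ := Csep⁻¹ * (ε * m) with hsdef
  have hs : 0 < s := by positivity
  clear_value s
  -- choice of the number of doublings
  set L : ℝ := Real.logb 2 (2 * Cdiam * Csep / ε) with hLdef
  set k : ℕ := ⌈L⌉₊ with hkdef
  have hX1 : (1:ℝ) ≤ 2 * Cdiam * Csep / ε := by
    rw [le_div_iff₀ hε]; nlinarith
  have hX0 : (0:ℝ) < 2 * Cdiam * Csep / ε := lt_of_lt_of_le one_pos hX1
  have hL0 : 0 ≤ L := Real.logb_nonneg one_lt_two hX1
  have hk_ge : 2 * Cdiam * Csep / ε ≤ (2:ℝ) ^ k := by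
    calc 2 * Cdiam * Csep / ε = (2:ℝ) ^ L := (Real.rpow_logb two_pos (by norm_num) hX0).symm
    _ ≤ (2:ℝ) ^ ((k:ℕ):ℝ) := Real.rpow_le_rpow_of_exponent_le one_le_two (Nat.le_ceil L)
    _ = (2:ℝ) ^ k := Real.rpow_natCast 2 k
  have hk_lt : ((k:ℕ):ℝ) < L + 1 := Nat.ceil_lt_add_one hL0
  -- doubling iteration
  have hiter : ∀ (x : X) (r : ℝ), 0 < r → ∀ n : ℕ, lam x (2 ^ n * r) ≤ Cl ^ n * lam x r := by
    intro x r hr n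
    induction n with
    | zero => simp
    | succ n ih =>
      have h2 : (2:ℝ) ^ (n + 1) * r = 2 * (2 ^ n * r) := by ring
      have hpos : (0:ℝ) < 2 ^ n * r := by positivity
      calc lam x ((2:ℝ) ^ (n + 1) * r) = lam x (2 * (2 ^ n * r)) := by rw [h2]
      _ ≤ Cl * lam x (2 ^ n * r) := hdouble x _ hpos
      _ ≤ Cl * (Cl ^ n * lam x r) := by
          exact mul_le_mul_of_nonneg_left ih hCl0.le
      _ = Cl ^ (n + 1) * lam x r := by ring
  set A : ℝ := Cl ^ k with hAdef
  have hA0 : (0:ℝ) < A := hAdef ▸ pow_pos hCl0 k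
  clear_value A
  -- key lower bound on lam at scale s
  have key : ∀ S : Set X, Bornology.IsBounded S → Metric.diam S ≤ Cdiam * m →
      ∀ x ∈ S, (μ S).toReal ≤ A * lam x s := by
    intro S hbS hdS x hx
    have h2ks : 2 * (Cdiam * m) ≤ 2 ^ k * s := by
      have : (2 * Cdiam * Csep / ε) * s = 2 * (Cdiam * m) := by
        rw [hsdef]; field_simp
      calc 2 * (Cdiam * m) = (2 * Cdiam * Csep / ε) * s := this.symm
      _ ≤ (2:ℝ) ^ k * s := mul_le_mul_of_nonneg_right hk_ge hs.le
    have hdlt : Metric.diam S < 2 ^ k * s := by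
      have h0 : 0 < Cdiam * m := by positivity
      calc Metric.diam S ≤ Cdiam * m := hdS
      _ < 2 * (Cdiam * m) := by linarith
      _ ≤ 2 ^ k * s := h2ks
    have hsub : S ⊆ Metric.ball x (2 ^ k * s) := by
      intro w hw
      simp only [Metric.mem_ball]
      exact lt_of_le_of_lt (Metric.dist_le_diam_of_mem hbS hw hx) hdlt
    have hrpos : (0:ℝ) < 2 ^ k * s := by positivity
    have hμle : μ S ≤ ENNReal.ofReal (A * lam x s) := by
      calc μ S ≤ μ (Metric.ball x (2 ^ k * s)) := measure_mono hsub
      _ ≤ ENNReal.ofReal (lam x (2 ^ k * s)) := hball x _ hrpos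
      _ ≤ ENNReal.ofReal (A * lam x s) := by
          rw [hAdef]; exact ENNReal.ofReal_le_ofReal (hiter x s hs k)
    have hls := hlam x s hs
    exact ENNReal.toReal_le_of_le_ofReal (by positivity) hμle
  have hdm₁ : Metric.diam S₁ ≤ Cdiam * m := by
    rcases le_total (Metric.diam S₁) (Metric.diam S₂) with h | h
    · rw [hmdef, min_eq_left h]; nlinarith
    · rw [hmdef, min_eq_right h]; exact hdc₁
  have hdm₂ : Metric.diam S₂ ≤ Cdiam * m := by
    rcases le_total (Metric.diam S₁) (Metric.diam S₂) with h | h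
    · rw [hmdef, min_eq_left h]; exact hdc₂
    · rw [hmdef, min_eq_right h]; nlinarith
  have key₁ : ∀ y ∈ S₁, μ₁ ≤ A * lam y s := by
    rw [hμ₁def]; exact key S₁ hb₁ hdm₁
  have key₂ : ∀ x ∈ S₂, μ₂ ≤ A * lam x s := by
    rw [hμ₂def]; exact key S₂ hb₂ hdm₂
  -- kernel bound
  set Q : ℝ := Real.sqrt (A / μ₂) * Real.sqrt (A / μ₁) with hQdef
  have hQ0 : 0 ≤ Q := by rw [hQdef]; positivity
  clear_value Q
  have hKb : ∀ x ∈ S₂, ∀ y ∈ S₁, |K x y| ≤ Ck * Q := by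
    intro x hx y hy
    have hsD : s ≤ dist x y := by
      rw [dist_comm]; exact hsep y hy x hx
    have hD : 0 < dist x y := lt_of_lt_of_le hs hsD
    have hxney : x ≠ y := by
      intro h; rw [h, dist_self] at hD; exact lt_irrefl _ hD
    have hlxD := hlam x (dist x y) hD
    have hlyD := hlam y (dist x y) hD
    have hlxs := hlam x s hs
    have hlys := hlam y s hs
    have h1x : 1 / lam x (dist x y) ≤ 1 / lam x s :=
      one_div_le_one_div_of_le hlxs (hmono x (Set.mem_Ioi.mpr hs) (Set.mem_Ioi.mpr hD) hsD)
    have h1y : 1 / lam y (dist x y) ≤ 1 / lam y s :=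
      one_div_le_one_div_of_le hlys (hmono y (Set.mem_Ioi.mpr hs) (Set.mem_Ioi.mpr hD) hsD)
    have hax : 1 / lam x s ≤ A / μ₂ := by
      rw [div_le_div_iff₀ hlxs hμ₂, one_mul]
      exact key₂ x hx
    have hay : 1 / lam y s ≤ A / μ₁ := by
      rw [div_le_div_iff₀ hlys hμ₁, one_mul]
      exact key₁ y hy
    calc |K x y| ≤ Ck * min (1 / lam x (dist x y)) (1 / lam y (dist x y)) := hK x y hxney
    _ ≤ Ck * Real.sqrt ((1 / lam x (dist x y)) * (1 / lam y (dist x y))) :=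
        mul_le_mul_of_nonneg_left (min_le_sqrt_mul' (by positivity) (by positivity)) hCk.le
    _ ≤ Ck * Real.sqrt ((A / μ₂) * (A / μ₁)) := by
        apply mul_le_mul_of_nonneg_left _ hCk.le
        apply Real.sqrt_le_sqrt
        apply mul_le_mul (le_trans h1x hax) (le_trans h1y hay) (by positivity) (by positivity)
    _ = Ck * Q := by rw [hQdef, Real.sqrt_mul (by positivity)]
  -- measurable hulls
  set T₁ : Set X := MeasureTheory.toMeasurable μ S₁ with hT₁def
  set T₂ : Set X := MeasureTheory.toMeasurable μ S₂ with hT₂def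
  set c₁ : ℝ := Ck * Q * Cb with hc₁def
  have hc₁0 : 0 ≤ c₁ := by rw [hc₁def]; positivity
  clear_value c₁
  -- inner integral bound
  have hinner : ∀ x ∈ S₂, |∫ y, K x y * φ y ∂μ| ≤ c₁ * μ₁ := by
    intro x hx
    have hpt : ∀ y, |K x y * φ y| ≤ T₁.indicator (fun _ => c₁) y := by
      intro y
      by_cases hy : φ y = 0
      · rw [hy, mul_zero, abs_zero]
        exact Set.indicator_nonneg (fun _ _ => hc₁0) y
      · have hyS : y ∈ S₁ := hφs hy
        have hyT : y ∈ T₁ := subset_toMeasurable μ S₁ hyS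
        rw [Set.indicator_of_mem hyT, hc₁def, abs_mul]
        exact mul_le_mul (hKb x hx y hyS) (hφb y) (abs_nonneg _) (by positivity)
    calc |∫ y, K x y * φ y ∂μ|
        ≤ (∫⁻ y, ENNReal.ofReal ‖K x y * φ y‖ ∂μ).toReal := by
          rw [← Real.norm_eq_abs]
          exact MeasureTheory.norm_integral_le_lintegral_norm _
    _ ≤ c₁ * μ₁ := by
        apply ENNReal.toReal_le_of_le_ofReal (by positivity)
        calc ∫⁻ y, ENNReal.ofReal ‖K x y * φ y‖ ∂μ
            ≤ ∫⁻ y, T₁.indicator (fun _ => ENNReal.ofReal c₁) y ∂μ := by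
              apply lintegral_mono
              intro y
              by_cases hy : y ∈ T₁
              · rw [Set.indicator_of_mem hy]
                exact ENNReal.ofReal_le_ofReal (by
                  have := hpt y; rwa [Set.indicator_of_mem hy] at this)
              · rw [Set.indicator_of_notMem hy]
                have := hpt y
                rw [Set.indicator_of_notMem hy] at this
                have h0 : ‖K x y * φ y‖ = 0 :=
                  le_antisymm (by rwa [Real.norm_eq_abs]) (norm_nonneg _)
                simp [h0]
        _ = ENNReal.ofReal c₁ * μ S₁ := by
              rw [lintegral_indicator_const (measurableSet_toMeasurable μ S₁),
                measure_toMeasurable]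
        _ = ENNReal.ofReal (c₁ * μ₁) := by
              rw [ENNReal.ofReal_mul hc₁0, hμ₁def, ENNReal.ofReal_toReal hfin₁]
  set c₂ : ℝ := c₁ * μ₁ * Cb with hc₂def
  have hc₂0 : 0 ≤ c₂ := by rw [hc₂def]; positivity
  clear_value c₂
  have houter : ∀ x, |(∫ y, K x y * φ y ∂μ) * ψ x| ≤ T₂.indicator (fun _ => c₂) x := by
    intro x
    by_cases hx : ψ x = 0
    · rw [hx, mul_zero, abs_zero]
      exact Set.indicator_nonneg (fun _ _ => hc₂0) x
    · have hxS : x ∈ S₂ := hψs hx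
      have hxT : x ∈ T₂ := subset_toMeasurable μ S₂ hxS
      rw [Set.indicator_of_mem hxT, hc₂def, abs_mul]
      exact mul_le_mul (hinner x hxS) (hψb x) (abs_nonneg _) (by positivity)
  -- the full double integral bound
  have hmain : |∫ x, (∫ y, K x y * φ y ∂μ) * ψ x ∂μ| ≤ c₂ * μ₂ := by
    calc |∫ x, (∫ y, K x y * φ y ∂μ) * ψ x ∂μ|
        ≤ (∫⁻ x, ENNReal.ofReal ‖(∫ y, K x y * φ y ∂μ) * ψ x‖ ∂μ).toReal := by
          rw [← Real.norm_eq_abs]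
          exact MeasureTheory.norm_integral_le_lintegral_norm _
    _ ≤ c₂ * μ₂ := by
        apply ENNReal.toReal_le_of_le_ofReal (by positivity)
        calc ∫⁻ x, ENNReal.ofReal ‖(∫ y, K x y * φ y ∂μ) * ψ x‖ ∂μ
            ≤ ∫⁻ x, T₂.indicator (fun _ => ENNReal.ofReal c₂) x ∂μ := by
              apply lintegral_mono
              intro x
              by_cases hx : x ∈ T₂
              · rw [Set.indicator_of_mem hx]
                exact ENNReal.ofReal_le_ofReal (by
                  have := houter x
                  rw [Set.indicator_of_mem hx] at this
                  rwa [Real.norm_eq_abs])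
              · rw [Set.indicator_of_notMem hx]
                have := houter x
                rw [Set.indicator_of_notMem hx] at this
                have h0 : ‖(∫ y, K x y * φ y ∂μ) * ψ x‖ = 0 :=
                  le_antisymm (by rwa [Real.norm_eq_abs]) (norm_nonneg _)
                simp [h0]
        _ = ENNReal.ofReal c₂ * μ S₂ := by
              rw [lintegral_indicator_const (measurableSet_toMeasurable μ S₂),
                measure_toMeasurable]
        _ = ENNReal.ofReal (c₂ * μ₂) := by
              rw [ENNReal.ofReal_mul hc₂0, hμ₂def, ENNReal.ofReal_toReal hfin₂]
  -- algebra: c₂ * μ₂ = Ck * Cb * Cb * A * √μ₁ * √μ₂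
  have halg : c₂ * μ₂ = Ck * Cb * Cb * A * (Real.sqrt μ₁ * Real.sqrt μ₂) := by
    have e1 : Real.sqrt (A / μ₂) = Real.sqrt A / Real.sqrt μ₂ := Real.sqrt_div hA0.le μ₂
    have e2 : Real.sqrt (A / μ₁) = Real.sqrt A / Real.sqrt μ₁ := Real.sqrt_div hA0.le μ₁
    have s1 : 0 < Real.sqrt μ₁ := Real.sqrt_pos.mpr hμ₁
    have s2 : 0 < Real.sqrt μ₂ := Real.sqrt_pos.mpr hμ₂
    have e3 : Real.sqrt A * Real.sqrt A = A := Real.mul_self_sqrt hA0.le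
    have e4 : Real.sqrt μ₁ * Real.sqrt μ₁ = μ₁ := Real.mul_self_sqrt hμ₁.le
    have e5 : Real.sqrt μ₂ * Real.sqrt μ₂ = μ₂ := Real.mul_self_sqrt hμ₂.le
    rw [hc₂def, hc₁def, hQdef, e1, e2]
    exact alg_aux' Ck Cb _ _ _ _ _ _ s1.ne' s2.ne' e3 e4 e5
  -- bound A by the ε power
  have hApow : A ≤ Cl ^ (1 + Real.logb 2 (2 * Cdiam * Csep)) * ε ^ (-(Real.logb 2 Cl)) := by
    have h1 : A = Cl ^ ((k:ℕ):ℝ) := hAdef.trans (Real.rpow_natCast Cl k).symm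
    have h2 : Cl ^ ((k:ℕ):ℝ) ≤ Cl ^ (L + 1) :=
      Real.rpow_le_rpow_of_exponent_le hCl.le hk_lt.le
    have hLsplit : L = Real.logb 2 (2 * Cdiam * Csep) + Real.logb 2 ε⁻¹ := by
      rw [hLdef, Real.logb_div (by positivity) (ne_of_gt hε), Real.logb_inv]
      ring
    have h3 : Cl ^ (L + 1) =
        Cl ^ (1 + Real.logb 2 (2 * Cdiam * Csep)) * Cl ^ (Real.logb 2 ε⁻¹) := by
      rw [← Real.rpow_add hCl0, hLsplit]; ring_nf
    have h4 : Cl ^ (Real.logb 2 ε⁻¹) = ε ^ (-(Real.logb 2 Cl)) := by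
      rw [Real.rpow_def_of_pos hCl0, Real.rpow_def_of_pos hε, Real.logb, Real.logb,
        Real.log_inv]
      congr 1
      ring
    rw [h1]
    calc Cl ^ ((k:ℕ):ℝ) ≤ Cl ^ (L + 1) := h2
    _ = Cl ^ (1 + Real.logb 2 (2 * Cdiam * Csep)) * ε ^ (-(Real.logb 2 Cl)) := by
        rw [h3, h4]
  have hstep : Ck * Cb * Cb * A * (Real.sqrt μ₁ * Real.sqrt μ₂) ≤
      Ck * Cb * Cb * (Cl ^ (1 + Real.logb 2 (2 * Cdiam * Csep)) * ε ^ (-(Real.logb 2 Cl))) *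
      (Real.sqrt μ₁ * Real.sqrt μ₂) :=
    mul_le_mul_of_nonneg_right (mul_le_mul_of_nonneg_left hApow (by positivity))
      (mul_nonneg (Real.sqrt_nonneg μ₁) (Real.sqrt_nonneg μ₂))
  calc |∫ x, (∫ y, K x y * φ y ∂μ) * ψ x ∂μ| ≤ c₂ * μ₂ := hmain
  _ = Ck * Cb * Cb * A * (Real.sqrt μ₁ * Real.sqrt μ₂) := halg
  _ ≤ Ck * Cb * Cb * (Cl ^ (1 + Real.logb 2 (2 * Cdiam * Csep)) * ε ^ (-(Real.logb 2 Cl))) *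
      (Real.sqrt μ₁ * Real.sqrt μ₂) := hstep
  _ = Ck * Cb * Cb * Cl ^ (1 + Real.logb 2 (2 * Cdiam * Csep)) * ε ^ (-(Real.logb 2 Cl)) *
      Real.sqrt μ₁ * Real.sqrt μ₂ := by ring
end

section
/- Random almost-covering with buffer: with τ uniformly distributed on [1,2] and independent of the random centers, define B^k_α = B_ρ(x^k_α, τ A₀^{-4}ϑ^k/32). Then for any fixed x ∈ X and ω ∈ (0,1), the probability that x lies in the annular buffer ⋃_α ((1+ω)B^k_α ∖ B^k_α) is at most η₀(ω) ≲ ω, since membership of x in (1+ω)B^k_α ∖ B^k_α constrains τ to an interval of length at most 4ω and x can lie in (1+ω)B^k_α for at most boundedly many α. -/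
open MeasureTheory
open scoped ENNReal

/-- Random almost-covering with buffer: with `τ` uniform on `[1,2]` and independent of
the centers, and random balls `B^k_α = B_ρ(x^k_α, τ A₀^{-4}ϑ^k/32)`, for a fixed point
`x` the probability of lying in the annular buffer `⋃_α ((1+ω)B^k_α ∖ B^k_α)` is
at most `η₀(ω) ≲ ω`. -/
theorem stmt_19 (N : ℕ) (hN : 0 < N) (A₀ : ℝ) (hA₀ : 1 ≤ A₀) :
    ∃ C₀ > (0:ℝ), ∀ (X : Type) (ρ : X → X → ℝ) (ϑ : ℝ) (k : ℤ)
      (Ω : Type) (_mΩ : MeasurableSpace Ω) (P : Measure Ω)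
      [IsProbabilityMeasure P]
      (τ : Ω → ℝ) (ι : Type) (c : ι → X) (x : X) (w : ℝ),
      -- quasimetric axioms
      (∀ x' y, ρ x' y = ρ y x') → (∀ x', ρ x' x' = 0) → (∀ x' y, 0 ≤ ρ x' y) →
      (∀ x' y z, ρ x' y ≤ A₀ * (ρ x' z + ρ z y)) →
      -- geometric doubling with constant N
      (∀ (x' : X) (r : ℝ), 0 < r → ∃ F : Finset X,
        F.card ≤ N ∧ {y | ρ y x' < r} ⊆ ⋃ v ∈ F, {y | ρ y v < r / 2}) →
      0 < ϑ → ϑ < (A₀ ^ 4)⁻¹ / 32 →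
      -- separation and covering properties of the random centers
      (∀ a b : ι, a ≠ b → ((2 * A₀)⁻¹) ^ 2 * ϑ ^ k ≤ ρ (c a) (c b)) →
      (∀ y : X, ∃ a, ρ y (c a) < 3 * A₀ ^ 2 * ϑ ^ k) →
      -- τ is uniformly distributed on [1,2]
      Measurable τ →
      Measure.map τ P = volume.restrict (Set.Icc (1:ℝ) 2) →
      0 < w → w < 1 →
      P {ω | ∃ a : ι,
          τ ω * ((A₀ ^ 4)⁻¹ * ϑ ^ k / 32) ≤ ρ x (c a) ∧
          ρ x (c a) < (1 + w) * (τ ω * ((A₀ ^ 4)⁻¹ * ϑ ^ k / 32))}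
        ≤ ENNReal.ofReal (C₀ * w) := by
  classical
  refine ⟨4 * N, by positivity, ?_⟩
  intro X ρ ϑ k Ω mΩ P hP τ ι c x w hsym hzero hnonneg htri hdouble hϑ hϑ' hsep hcov hτm hτd hw hw1
  have hA0 : (0:ℝ) < A₀ := lt_of_lt_of_le one_pos hA₀
  have hϑk : (0:ℝ) < ϑ ^ k := by positivity
  set r : ℝ := (A₀ ^ 4)⁻¹ * ϑ ^ k / 32 with hr
  have hrpos : 0 < r := by positivity
  -- the set of relevant centers
  set S : Set ι := {a | ρ x (c a) < 4 * r} with hS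
  obtain ⟨F, hFcard, hFcov⟩ := hdouble x (4 * r) (by positivity)
  have hchoice : ∀ a ∈ S, ∃ v ∈ F, ρ (c a) v < 4 * r / 2 := by
    intro a ha
    have hmem : c a ∈ {y | ρ y x < 4 * r} := by
      simpa [hsym (c a) x] using (show ρ x (c a) < 4 * r from ha)
    have := hFcov hmem
    simpa using this
  haveI : Nonempty X := ⟨x⟩
  choose! f hfF hfd using hchoice
  have hinj : Set.InjOn f S := by
    intro a ha b hb hab
    by_contra hne
    have h1 := hfd a ha
    have h2 : ρ (f a) (c b) < 4 * r / 2 := by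
      rw [hab, hsym (f b) (c b)]; exact hfd b hb
    have hsepab := hsep a b hne
    have htr := htri (c a) (c b) (f a)
    have e1 : (2 * A₀)⁻¹ ^ 2 * ϑ ^ k = ϑ ^ k / (4 * A₀ ^ 2) := by
      rw [inv_pow, show (2 * A₀) ^ 2 = 4 * A₀ ^ 2 by ring, div_eq_mul_inv, mul_comm]
    have e2 : A₀ * (4 * r) = ϑ ^ k / (8 * A₀ ^ 3) := by
      rw [hr]; field_simp; ring
    have e3 : ϑ ^ k / (8 * A₀ ^ 3) ≤ ϑ ^ k / (4 * A₀ ^ 2) := by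
      apply div_le_div_of_nonneg_left hϑk.le (by positivity)
      nlinarith
    have h3 : A₀ * (ρ (c a) (f a) + ρ (f a) (c b)) < A₀ * (4 * r) := by
      apply mul_lt_mul_of_pos_left _ hA0
      linarith
    rw [e1] at hsepab
    rw [e2] at h3
    linarith
  have hfim : f '' S ⊆ (F : Set X) := by
    rintro _ ⟨a, ha, rfl⟩; exact hfF a ha
  have hSfin : S.Finite := Set.Finite.of_finite_image (F.finite_toSet.subset hfim) hinj
  have hScard : hSfin.toFinset.card ≤ N := by
    have h1 : S.ncard ≤ (F : Set X).ncard :=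
      (Set.ncard_image_of_injOn hinj).symm.trans_le
        (Set.ncard_le_ncard hfim F.finite_toSet)
    rw [Set.ncard_coe_finset] at h1
    rw [← Set.ncard_eq_toFinset_card S hSfin]
    exact h1.trans hFcard
  -- a.s. τ ∈ [1,2]
  have hτIcc : P (τ ⁻¹' Set.Icc (1:ℝ) 2) = 1 := by
    have := Measure.map_apply (μ := P) hτm (measurableSet_Icc : MeasurableSet (Set.Icc (1:ℝ) 2))
    rw [hτd] at this
    rw [← this]
    simp [Measure.restrict_apply, Real.volume_Icc]
    norm_num
  have hτcompl : P ((τ ⁻¹' Set.Icc (1:ℝ) 2)ᶜ) = 0 := by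
    rw [measure_compl (hτm measurableSet_Icc) (measure_ne_top _ _), hτIcc,
      measure_univ, tsub_self]
  set E : Set Ω := {ω | ∃ a : ι,
      τ ω * ((A₀ ^ 4)⁻¹ * ϑ ^ k / 32) ≤ ρ x (c a) ∧
      ρ x (c a) < (1 + w) * (τ ω * ((A₀ ^ 4)⁻¹ * ϑ ^ k / 32))} with hE
  have hsub : E ∩ (τ ⁻¹' Set.Icc (1:ℝ) 2) ⊆
      ⋃ a ∈ hSfin.toFinset, τ ⁻¹' (Set.Ioc (ρ x (c a) / ((1 + w) * r)) (ρ x (c a) / r)) := by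
    rintro ω ⟨⟨a, h1, h2⟩, hτ12⟩
    obtain ⟨hτ1, hτ2⟩ := hτ12
    rw [← hr] at h1 h2
    have haS : a ∈ S := by
      have : ρ x (c a) < 4 * r := by
        nlinarith [mul_nonneg (mul_nonneg (by linarith : (0:ℝ) ≤ 1 + w) hrpos.le)
            (by linarith : (0:ℝ) ≤ 2 - τ ω),
          mul_pos (by linarith : (0:ℝ) < 1 - w) hrpos]
      exact this
    refine Set.mem_biUnion (hSfin.mem_toFinset.mpr haS) ?_
    constructor
    · rw [div_lt_iff₀ (by positivity)]
      nlinarith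
    · rw [le_div_iff₀ hrpos]
      exact h1
  have hterm : ∀ a ∈ hSfin.toFinset,
      P (τ ⁻¹' (Set.Ioc (ρ x (c a) / ((1 + w) * r)) (ρ x (c a) / r)))
        ≤ ENNReal.ofReal (4 * w) := by
    intro a ha
    have haS : a ∈ S := hSfin.mem_toFinset.mp ha
    have hd4 : ρ x (c a) < 4 * r := haS
    have hd0 : 0 ≤ ρ x (c a) := hnonneg _ _
    have hmap := Measure.map_apply (μ := P) hτm
      (measurableSet_Ioc : MeasurableSet (Set.Ioc (ρ x (c a) / ((1 + w) * r)) (ρ x (c a) / r)))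
    rw [hτd] at hmap
    rw [← hmap]
    refine le_trans (Measure.restrict_le_self _) ?_
    rw [Real.volume_Ioc]
    refine ENNReal.ofReal_le_ofReal ?_
    have h1pw : (0:ℝ) < 1 + w := by linarith
    have hiw : (0:ℝ) < ((1 + w))⁻¹ := by positivity
    have hinv : (1 + w) * (1 + w)⁻¹ = 1 := mul_inv_cancel₀ (ne_of_gt h1pw)
    have hu : ρ x (c a) / r ≤ 4 := (div_le_iff₀ hrpos).2 (by linarith)
    have hu0 : 0 ≤ ρ x (c a) / r := by positivity
    have hrw : ρ x (c a) / ((1 + w) * r) = (ρ x (c a) / r) * (1 + w)⁻¹ := by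
      rw [mul_comm (1 + w) r, ← div_div, div_eq_mul_inv]
    rw [hrw]
    nlinarith [mul_nonneg hu0 hiw.le, mul_nonneg hw.le hiw.le,
      mul_nonneg (mul_nonneg hu0 hw.le) hiw.le]
  calc P E ≤ P (E ∩ (τ ⁻¹' Set.Icc (1:ℝ) 2)) + P (E \ (τ ⁻¹' Set.Icc (1:ℝ) 2)) :=
        measure_le_inter_add_diff _ _ _
    _ ≤ P (⋃ a ∈ hSfin.toFinset,
          τ ⁻¹' (Set.Ioc (ρ x (c a) / ((1 + w) * r)) (ρ x (c a) / r))) + 0 := by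
        exact add_le_add (measure_mono hsub)
          (le_of_le_of_eq (measure_mono (Set.diff_subset_compl _ _)) hτcompl)
    _ ≤ (∑ a ∈ hSfin.toFinset,
          P (τ ⁻¹' (Set.Ioc (ρ x (c a) / ((1 + w) * r)) (ρ x (c a) / r)))) := by
        rw [add_zero]; exact measure_biUnion_finset_le _ _
    _ ≤ hSfin.toFinset.card • ENNReal.ofReal (4 * w) :=
        Finset.sum_le_card_nsmul _ _ _ hterm
    _ ≤ N • ENNReal.ofReal (4 * w) := by
        rw [nsmul_eq_mul, nsmul_eq_mul]
        exact mul_le_mul_left (Nat.cast_le.mpr hScard) _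
    _ = ENNReal.ofReal (4 * N * w) := by
        rw [nsmul_eq_mul, ← ENNReal.ofReal_natCast, ← ENNReal.ofReal_mul (by positivity)]
        ring_nf
end
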